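/- arXiv:0711.1405 — 2 statements merged into one kernel-verified Lean document; each statement's English description precedes it below -/
import Mathlib

section
/- For k ≥ 2, n ≥ 0 and h ≥ 1, the number of k-noncrossing core-structures with h arcs satisfies C_k(n,h) = Σ_{b=0}^{h-1} (-1)^{h-b-1} C(h-1, b) T_{k,1}(n - 2h + 2b + 2, b+1), where T_{k,1}(m,j) is the number of k-noncrossing RNA structures on {1,...,m} with j arcs (no stack-length restriction). -/
open Finset

/-- A partial matching on the vertex set {1,…,n}: a set of arcs (i,j) with
1 ≤ i < j ≤ n in which every vertex has degree ≤ 1. -/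
def IsPartialMatching (n : ℕ) (A : Finset (ℕ × ℕ)) : Prop :=
  (∀ p ∈ A, 1 ≤ p.1 ∧ p.1 < p.2 ∧ p.2 ≤ n) ∧
  (∀ p ∈ A, ∀ q ∈ A, p ≠ q → p.1 ≠ q.1 ∧ p.1 ≠ q.2 ∧ p.2 ≠ q.1 ∧ p.2 ≠ q.2)

/-- `A` contains `k` mutually crossing arcs, i.e. arcs
(i₁,j₁),…,(i_k,j_k) with i₁ < … < i_k < j₁ < … < j_k. -/
def HasKCrossing (k : ℕ) (A : Finset (ℕ × ℕ)) : Prop :=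
  ∃ f : Fin k → ℕ × ℕ, (∀ t, f t ∈ A) ∧
    StrictMono (fun t => (f t).1) ∧ StrictMono (fun t => (f t).2) ∧
    ∀ s t : Fin k, (f s).1 < (f t).2

/-- no arc of the form (i, i+1): minimum arc-length ≥ 2. -/
def NoOneArc (A : Finset (ℕ × ℕ)) : Prop := ∀ p ∈ A, p.1 + 1 < p.2

/-- every arc lies in a stack of σ parallel arcs ((a,b),(a+1,b-1),…):
every maximal stack has length ≥ σ. -/
def MinStack (σ : ℕ) (A : Finset (ℕ × ℕ)) : Prop :=
  ∀ p ∈ A, ∃ a b : ℕ, (∀ s < σ, (a + s, b - s) ∈ A) ∧ ∃ s < σ, p = (a + s, b - s)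

/-- core condition: no two parallel arcs (i,j), (i+1,j-1). -/
def IsCore (A : Finset (ℕ × ℕ)) : Prop := ∀ p ∈ A, (p.1 + 1, p.2 - 1) ∉ A

/-- k-noncrossing RNA structure on {1,…,n} with minimum stack-length ≥ σ. -/
def RNAStruct (k σ n : ℕ) (A : Finset (ℕ × ℕ)) : Prop :=
  IsPartialMatching n A ∧ ¬ HasKCrossing k A ∧ NoOneArc A ∧ MinStack σ A

/-- T_{k,σ}(n,h): number of k-noncrossing RNA structures on {1,…,n} with
minimum stack-length ≥ σ and h arcs. -/
noncomputable def Tcount (k σ n h : ℕ) : ℕ :=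
  Nat.card {A : Finset (ℕ × ℕ) // RNAStruct k σ n A ∧ A.card = h}

/-- T_{k,σ}(n): number of k-noncrossing RNA structures on {1,…,n} with
minimum stack-length ≥ σ. -/
noncomputable def Ttot (k σ n : ℕ) : ℕ :=
  Nat.card {A : Finset (ℕ × ℕ) // RNAStruct k σ n A}

/-- C_k(n,h): number of k-noncrossing core-structures on {1,…,n} with h arcs. -/
noncomputable def Ccount (k n h : ℕ) : ℕ :=
  Nat.card {A : Finset (ℕ × ℕ) // RNAStruct k 1 n A ∧ IsCore A ∧ A.card = h}

/-- C_k(n): number of k-noncrossing core-structures on {1,…,n}. -/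
noncomputable def Ctot (k n : ℕ) : ℕ :=
  Nat.card {A : Finset (ℕ × ℕ) // RNAStruct k 1 n A ∧ IsCore A}

/-- f_k(n,ℓ): number of k-noncrossing partial matchings of {1,…,n} with
exactly ℓ isolated vertices (1-arcs allowed). -/
noncomputable def fcount (k n ℓ : ℕ) : ℕ :=
  Nat.card {A : Finset (ℕ × ℕ) // IsPartialMatching n A ∧ ¬ HasKCrossing k A ∧
    2 * A.card + ℓ = n}

/-- Binomial coefficient C(t,r) for integer t, with the convention
that it vanishes for t < 0 (and for 0 ≤ t < r via Nat.choose). -/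
def intChoose (t : ℤ) (r : ℕ) : ℕ := if 0 ≤ t then t.toNat.choose r else 0

namespace Stmt12

/-- deletion relabelling -/
def dm (p : ℕ × ℕ) (v : ℕ) : ℕ := v - (if p.1 < v then 1 else 0) - (if p.2 < v then 1 else 0)
/-- insertion relabelling -/
def um (q : ℕ × ℕ) (v : ℕ) : ℕ := v + (if q.1 < v then 1 else 0) + (if q.2 ≤ v then 1 else 0)
def outerA (p : ℕ × ℕ) : ℕ × ℕ := (p.1 - 1, p.2 + 1)
def dmp (p r : ℕ × ℕ) : ℕ × ℕ := (dm p r.1, dm p r.2)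
def ump (q r : ℕ × ℕ) : ℕ × ℕ := (um q r.1, um q r.2)
def delF (p : ℕ × ℕ) (A : Finset (ℕ × ℕ)) : Finset (ℕ × ℕ) := (A.erase p).image (dmp p)
noncomputable def insF (q : ℕ × ℕ) (A : Finset (ℕ × ℕ)) : Finset (ℕ × ℕ) :=
  insert (q.1+1, q.2+1) (A.image (ump q))

section Arith
variable {p q : ℕ × ℕ} {x y v : ℕ}

lemma um_le (h : x ≤ y) : um q x ≤ um q y := by unfold um; split_ifs <;> omega
lemma um_lt (h : x < y) : um q x < um q y := by unfold um; split_ifs <;> omega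
lemma um_reflect_lt (h : um q x < um q y) : x < y := by
  by_contra hc
  exact absurd (um_le (q := q) (not_lt.mp hc)) (by omega)
lemma um_inj (h : um q x = um q y) : x = y := by
  rcases lt_trichotomy x y with h'|h'|h'
  · exact absurd (um_lt (q := q) h') (by omega)
  · exact h'
  · exact absurd (um_lt (q := q) h') (by omega)
lemma um_ge : x ≤ um q x := by unfold um; split_ifs <;> omega
lemma um_le_add2 : um q x ≤ x + 2 := by unfold um; split_ifs <;> omega
lemma um_add2 (h : x + 2 ≤ y) : um q x + 2 ≤ um q y := by unfold um; split_ifs <;> omega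
lemma um_pos (h : 1 ≤ x) : 1 ≤ um q x := le_trans h um_ge

lemma um_ne_new1 (hq : q.1 < q.2) : um q v ≠ q.1 + 1 := by unfold um; split_ifs <;> omega
lemma um_ne_new2 (hq : q.1 < q.2) : um q v ≠ q.2 + 1 := by unfold um; split_ifs <;> omega

lemma umA1 (hq : q.1 < q.2) (h : q.1 + 1 ≤ um q v) : q.1 < v := by
  by_contra hc; unfold um at h; split_ifs at h <;> omega
lemma umA2 (hq : q.1 < q.2) (h : um q v ≤ q.2) : v < q.2 := by
  by_contra hc; unfold um at h; split_ifs at h <;> omega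
lemma umA3 (hq : q.1 < q.2) (h : q.2 + 1 < um q v) : q.2 ≤ v := by
  by_contra hc; unfold um at h; split_ifs at h <;> omega
lemma umA4 (h : um q v ≤ q.1) : v ≤ q.1 := le_trans um_ge h

lemma um_eq_q1add2 (hq : q.1 + 1 < q.2) (h : um q v = q.1 + 2) : v = q.1 + 1 := by
  unfold um at h; split_ifs at h <;> omega
lemma um_eq_q2 (hq : q.1 + 1 < q.2) (h : um q v = q.2) : v + 1 = q.2 := by
  unfold um at h; split_ifs at h <;> omega
lemma um_succ_eq (hq : q.1 < q.2) (h : um q x + 1 = um q y) :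
    y = x + 1 ∧ q.1 ≠ x ∧ q.2 ≠ y := by
  have hxy : x < y := um_reflect_lt (q := q) (by omega)
  unfold um at h; split_ifs at h <;> omega
lemma um_succ (h1 : q.1 ≠ x) (h2 : q.2 ≠ x + 1) : um q (x+1) = um q x + 1 := by
  unfold um; split_ifs <;> omega

lemma dm_le (hp : p.1 < p.2) (h : x ≤ y) : dm p x ≤ dm p y := by unfold dm; split_ifs <;> omega
lemma dm_lt (hp : p.1 + 1 < p.2) (hx1 : x ≠ p.1) (hx2 : x ≠ p.2)
    (h1 : y ≠ p.1) (h2 : y ≠ p.2) (h : x < y) :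
    dm p x < dm p y := by unfold dm; split_ifs <;> omega
lemma dm_inj (hp : p.1 + 1 < p.2) (hx1 : x ≠ p.1) (hx2 : x ≠ p.2) (hy1 : y ≠ p.1) (hy2 : y ≠ p.2)
    (h : dm p x = dm p y) : x = y := by
  rcases lt_trichotomy x y with h'|h'|h'
  · exact absurd (dm_lt hp hx1 hx2 hy1 hy2 h') (by omega)
  · exact h'
  · exact absurd (dm_lt hp hy1 hy2 hx1 hx2 h') (by omega)
lemma dm_um (hq : q.1 < q.2) : dm (q.1+1, q.2+1) (um q v) = v := by
  unfold dm um; split_ifs <;> omega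
lemma um_dm (hp1 : 2 ≤ p.1) (hp : p.1 + 1 < p.2) (h1 : v ≠ p.1) (h2 : v ≠ p.2) :
    um (p.1 - 1, p.2 - 1) (dm p v) = v := by
  unfold dm um; split_ifs <;> omega
lemma dm_outer1 (hp1 : 2 ≤ p.1) (hp : p.1 + 1 < p.2) : dm p (p.1 - 1) = p.1 - 1 := by
  unfold dm; split_ifs <;> omega
lemma dm_outer2 (hp1 : 2 ≤ p.1) (hp : p.1 + 1 < p.2) : dm p (p.2 + 1) = p.2 - 1 := by
  unfold dm; split_ifs <;> omega

end Arith
end Stmt12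

section Main

open Stmt12

variable {k m n : ℕ} {A : Finset (ℕ × ℕ)} {p q : ℕ × ℕ}

lemma minStack_one (A : Finset (ℕ × ℕ)) : MinStack 1 A := by
  intro p hp
  refine ⟨p.1, p.2, fun s hs => ?_, 0, Nat.zero_lt_one, by simp⟩
  interval_cases s; simpa

lemma rna_iff : RNAStruct k 1 n A ↔
    IsPartialMatching n A ∧ ¬ HasKCrossing k A ∧ NoOneArc A := by
  constructor
  · rintro ⟨h1, h2, h3, _⟩; exact ⟨h1, h2, h3⟩
  · rintro ⟨h1, h2, h3⟩; exact ⟨h1, h2, h3, minStack_one A⟩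

lemma share_eq (hM : IsPartialMatching n A) (hp : p ∈ A) (hq : q ∈ A)
    (h : p.1 = q.1 ∨ p.1 = q.2 ∨ p.2 = q.1 ∨ p.2 = q.2) : p = q := by
  by_contra hne
  obtain ⟨a, b, c, d⟩ := hM.2 p hp q hq hne
  tauto

section Ins

variable (hM : IsPartialMatching m A) (hno : NoOneArc A) (hq : q ∈ A)

lemma new_not_mem_image (h12 : q.1 < q.2) (B : Finset (ℕ × ℕ)) :
    (q.1+1, q.2+1) ∉ B.image (ump q) := by
  intro h
  obtain ⟨r, _, hr⟩ := Finset.mem_image.mp h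
  exact um_ne_new1 h12 (congrArg Prod.fst hr)

include hM hq in
lemma ins_card : (insF q A).card = A.card + 1 := by
  have h12 : q.1 < q.2 := (hM.1 q hq).2.1
  rw [insF, Finset.card_insert_of_notMem (new_not_mem_image h12 A),
    Finset.card_image_of_injective _ (fun a b hab => ?_)]
  exact Prod.ext (um_inj (congrArg Prod.fst hab)) (um_inj (congrArg Prod.snd hab))

include hM hq in
lemma ins_matching : IsPartialMatching (m+2) (insF q A) := by
  have h12 : q.1 < q.2 := (hM.1 q hq).2.1
  obtain ⟨hq1, _, hq2⟩ := hM.1 q hq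
  constructor
  · intro r' hr'
    rcases Finset.mem_insert.mp hr' with rfl | h
    · exact ⟨by omega, by omega, by omega⟩
    · obtain ⟨r, hr, rfl⟩ := Finset.mem_image.mp h
      obtain ⟨h1, h2, h3⟩ := hM.1 r hr
      exact ⟨um_pos h1, um_lt h2, le_trans um_le_add2 (by omega)⟩
  · intro r' hr' s' hs' hne
    rcases Finset.mem_insert.mp hr' with rfl | h <;>
      rcases Finset.mem_insert.mp hs' with rfl | h'
    · exact absurd rfl hne
    · obtain ⟨s, hs, rfl⟩ := Finset.mem_image.mp h'
      exact ⟨Ne.symm (um_ne_new1 h12), Ne.symm (um_ne_new1 h12),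
        Ne.symm (um_ne_new2 h12), Ne.symm (um_ne_new2 h12)⟩
    · obtain ⟨r, hr, rfl⟩ := Finset.mem_image.mp h
      exact ⟨um_ne_new1 h12, um_ne_new2 h12, um_ne_new1 h12, um_ne_new2 h12⟩
    · obtain ⟨r, hr, rfl⟩ := Finset.mem_image.mp h
      obtain ⟨s, hs, rfl⟩ := Finset.mem_image.mp h'
      have hrs : r ≠ s := fun hh => hne (by rw [hh])
      obtain ⟨a, b, c, d⟩ := hM.2 r hr s hs hrs
      exact ⟨fun hh => a (um_inj hh), fun hh => b (um_inj hh),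
        fun hh => c (um_inj hh), fun hh => d (um_inj hh)⟩

include hno hq in
lemma ins_noone : NoOneArc (insF q A) := by
  have h12 : q.1 + 1 < q.2 := hno q hq
  intro r' hr'
  rcases Finset.mem_insert.mp hr' with rfl | h
  · simpa using h12
  · obtain ⟨r, hr, rfl⟩ := Finset.mem_image.mp h
    have := hno r hr
    have := um_add2 (q := q) (x := r.1) (y := r.2) (by omega)
    show um q r.1 + 1 < um q r.2
    omega

lemma um_self1 (h12 : q.1 < q.2) : um q q.1 = q.1 := by unfold um; split_ifs <;> omega
lemma um_self2 (h12 : q.1 < q.2) : um q q.2 = q.2 + 2 := by unfold um; split_ifs <;> omega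

include hM hq in
lemma ins_nocross (hnc : ¬ HasKCrossing k A) : ¬ HasKCrossing k (insF q A) := by
  have h12 : q.1 < q.2 := (hM.1 q hq).2.1
  rintro ⟨f, hfm, hf1, hf2, hfc⟩
  classical
  set g : Fin k → ℕ × ℕ :=
    fun t => if f t = (q.1+1, q.2+1) then q else dmp (q.1+1, q.2+1) (f t) with hg
  have key : ∀ t, g t ∈ A ∧ (f t ≠ (q.1+1, q.2+1) → f t = ump q (g t)) := by
    intro t
    by_cases hc : f t = (q.1+1, q.2+1)
    · simp only [hg, hc, if_pos rfl]
      exact ⟨hq, fun hcc => absurd rfl hcc⟩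
    · have hmem : f t ∈ A.image (ump q) := by
        rcases Finset.mem_insert.mp (hfm t) with h | h
        · exact absurd h hc
        · exact h
      obtain ⟨r, hr, hrt⟩ := Finset.mem_image.mp hmem
      have hgt : g t = r := by
        simp only [hg, if_neg hc, ← hrt]
        exact Prod.ext (dm_um (q := q) h12) (dm_um (q := q) h12)
      rw [hgt]
      exact ⟨hr, fun _ => hrt.symm⟩
  have hqq : ump q q = (q.1, q.2 + 2) := Prod.ext (um_self1 h12) (um_self2 h12)
  apply hnc
  refine ⟨g, fun t => (key t).1, ?_, ?_, ?_⟩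
  · -- StrictMono fst
    intro s t hst
    show (g s).1 < (g t).1
    have h1 : (f s).1 < (f t).1 := hf1 hst
    have h2 : (f s).2 < (f t).2 := hf2 hst
    by_cases hs : f s = (q.1+1, q.2+1) <;> by_cases ht : f t = (q.1+1, q.2+1)
    · rw [hs, ht] at h1; omega
    · have hgs : g s = q := by simp [hg, hs]
      have hft := (key t).2 ht
      rw [hs, hft] at h1
      simp only [ump] at h1
      rw [hgs]
      exact umA1 h12 (by omega)
    · have hgt : g t = q := by simp [hg, ht]
      have hfs := (key s).2 hs
      rw [ht, hfs] at h1 h2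
      simp only [ump] at h1 h2
      rw [hgt]
      have hle : (g s).1 ≤ q.1 := umA4 (q := q) (by omega)
      rcases eq_or_lt_of_le hle with heq | hlt
      · exfalso
        have hgsq : g s = q := share_eq hM (key s).1 hq (Or.inl heq)
        rw [hgsq, um_self2 h12] at h2
        simp at h2
      · exact hlt
    · have hfs := (key s).2 hs
      have hft := (key t).2 ht
      rw [hfs, hft] at h1
      simp only [ump] at h1
      exact um_reflect_lt h1
  · -- StrictMono snd
    intro s t hst
    show (g s).2 < (g t).2
    have h1 : (f s).1 < (f t).1 := hf1 hst
    have h2 : (f s).2 < (f t).2 := hf2 hst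
    by_cases hs : f s = (q.1+1, q.2+1) <;> by_cases ht : f t = (q.1+1, q.2+1)
    · rw [hs, ht] at h1; omega
    · have hgs : g s = q := by simp [hg, hs]
      have hft := (key t).2 ht
      rw [hs, hft] at h1 h2
      simp only [ump] at h1 h2
      rw [hgs]
      have hle : q.2 ≤ (g t).2 := umA3 (q := q) h12 (by omega)
      rcases eq_or_lt_of_le hle with heq | hlt
      · exfalso
        have hgtq : g t = q := share_eq hM (key t).1 hq (Or.inr (Or.inr (Or.inr heq.symm)))
        rw [hgtq, um_self1 h12] at h1
        omega
      · exact hlt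
    · have hgt : g t = q := by simp [hg, ht]
      have hfs := (key s).2 hs
      rw [ht, hfs] at h2
      simp only [ump] at h2
      rw [hgt]
      exact umA2 h12 (by omega)
    · have hfs := (key s).2 hs
      have hft := (key t).2 ht
      rw [hfs, hft] at h2
      simp only [ump] at h2
      exact um_reflect_lt h2
  · -- cross
    intro s t
    have h1 := hfc s t
    by_cases hs : f s = (q.1+1, q.2+1) <;> by_cases ht : f t = (q.1+1, q.2+1)
    · have hgs : g s = q := by simp [hg, hs]
      have hgt : g t = q := by simp [hg, ht]
      rw [hgs, hgt]; exact h12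
    · have hgs : g s = q := by simp [hg, hs]
      have hft := (key t).2 ht
      rw [hs, hft] at h1
      simp only [ump] at h1
      rw [hgs]
      exact umA1 h12 (by omega)
    · have hgt : g t = q := by simp [hg, ht]
      have hfs := (key s).2 hs
      rw [ht, hfs] at h1
      simp only [ump] at h1
      rw [hgt]
      exact umA2 h12 (by omega)
    · have hfs := (key s).2 hs
      have hft := (key t).2 ht
      rw [hfs, hft] at h1
      simp only [ump] at h1
      exact um_reflect_lt h1

end Ins
end Main

section Del
open Stmt12

variable {k m n : ℕ} {A : Finset (ℕ × ℕ)} {p q : ℕ × ℕ}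

variable (hM : IsPartialMatching (m+2) A) (hno : NoOneArc A) (hp : p ∈ A)
  (hop : outerA p ∈ A)

include hM hop in
lemma p1_ge (hp : p ∈ A) : 2 ≤ p.1 := by
  have h1 := (hM.1 (outerA p) hop).1
  have h2 := (hM.1 p hp).1
  simp only [outerA] at h1
  omega

include hM hop in
lemma p2_le : p.2 + 1 ≤ m + 2 := by
  have h1 := (hM.1 (outerA p) hop).2.2
  simpa [outerA] using h1

include hM hp in
lemma endpoints_ne (hr : q ∈ A) (hne : q ≠ p) :
    q.1 ≠ p.1 ∧ q.1 ≠ p.2 ∧ q.2 ≠ p.1 ∧ q.2 ≠ p.2 :=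
  hM.2 q hr p hp hne

include hM hno hp hop in
lemma del_matching : IsPartialMatching m (delF p A) := by
  have hp1 := p1_ge hM hop hp
  have hp2 := p2_le hM hop
  have hpno := hno p hp
  constructor
  · intro r' hr'
    obtain ⟨r, hr, rfl⟩ := Finset.mem_image.mp hr'
    have hrA := Finset.mem_of_mem_erase hr
    have hrp := Finset.ne_of_mem_erase hr
    obtain ⟨e1, e2, e3, e4⟩ := endpoints_ne hM hp hrA hrp
    obtain ⟨b1, b2, b3⟩ := hM.1 r hrA
    refine ⟨?_, dm_lt hpno e1 e2 e3 e4 b2, ?_⟩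
    · show 1 ≤ dm p r.1
      unfold dm; split_ifs <;> omega
    · show dm p r.2 ≤ m
      unfold dm; split_ifs <;> omega
  · intro r' hr' s' hs' hne
    obtain ⟨r, hr, rfl⟩ := Finset.mem_image.mp hr'
    obtain ⟨s, hs, rfl⟩ := Finset.mem_image.mp hs'
    have hrA := Finset.mem_of_mem_erase hr
    have hsA := Finset.mem_of_mem_erase hs
    obtain ⟨e1, e2, e3, e4⟩ := endpoints_ne hM hp hrA (Finset.ne_of_mem_erase hr)
    obtain ⟨f1, f2, f3, f4⟩ := endpoints_ne hM hp hsA (Finset.ne_of_mem_erase hs)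
    have hrs : r ≠ s := fun hh => hne (by rw [hh])
    obtain ⟨a, b, c, d⟩ := hM.2 r hrA s hsA hrs
    exact ⟨fun hh => a (dm_inj hpno e1 e2 f1 f2 hh),
      fun hh => b (dm_inj hpno e1 e2 f3 f4 hh),
      fun hh => c (dm_inj hpno e3 e4 f1 f2 hh),
      fun hh => d (dm_inj hpno e3 e4 f3 f4 hh)⟩

include hM hno hp hop in
lemma del_noone : NoOneArc (delF p A) := by
  have hp1 := p1_ge hM hop hp
  have hpno := hno p hp
  intro r' hr'
  obtain ⟨r, hr, rfl⟩ := Finset.mem_image.mp hr'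
  have hrA := Finset.mem_of_mem_erase hr
  have hrp := Finset.ne_of_mem_erase hr
  obtain ⟨e1, e2, e3, e4⟩ := endpoints_ne hM hp hrA hrp
  have hr12 := hno r hrA
  show dm p r.1 + 1 < dm p r.2
  by_contra hcon
  have key : r.2 = r.1 + 2 ∧ (p.1 = r.1 + 1 ∨ p.2 = r.1 + 1) := by
    unfold dm at hcon; split_ifs at hcon <;> omega
  rcases key.2 with h1 | h1
  · have heq : outerA p = r := share_eq hM hop hrA (Or.inl (by simp [outerA]; omega))
    have := congrArg Prod.snd heq
    simp only [outerA] at this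
    omega
  · have heq : outerA p = r :=
      share_eq hM hop hrA (Or.inr (Or.inr (Or.inr (by simp [outerA]; omega))))
    have h2 := congrArg Prod.fst heq
    have h3 := congrArg Prod.snd heq
    simp only [outerA] at h2 h3
    omega

include hM hno hp hop in
lemma del_nocross (hnc : ¬ HasKCrossing k A) : ¬ HasKCrossing k (delF p A) := by
  have hp1 := p1_ge hM hop hp
  have hpno := hno p hp
  rintro ⟨f, hfm, hf1, hf2, hfc⟩
  apply hnc
  refine ⟨fun t => ump (p.1 - 1, p.2 - 1) (f t), fun t => ?_, ?_, ?_, ?_⟩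
  · show ump (p.1 - 1, p.2 - 1) (f t) ∈ A
    obtain ⟨r, hr, hrt⟩ := Finset.mem_image.mp (hfm t)
    have hrA := Finset.mem_of_mem_erase hr
    obtain ⟨e1, e2, e3, e4⟩ := endpoints_ne hM hp hrA (Finset.ne_of_mem_erase hr)
    have : ump (p.1 - 1, p.2 - 1) (f t) = r := by
      rw [← hrt]
      exact Prod.ext (um_dm hp1 hpno e1 e2) (um_dm hp1 hpno e3 e4)
    rw [this]; exact hrA
  · exact fun s t hst => um_lt (hf1 hst)
  · exact fun s t hst => um_lt (hf2 hst)
  · exact fun s t => um_lt (hfc s t)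

include hM hno hp hop in
lemma mark_mem_del : (p.1 - 1, p.2 - 1) ∈ delF p A := by
  have hp1 := p1_ge hM hop hp
  have hpno := hno p hp
  have hne : outerA p ≠ p := by
    intro hh
    have := congrArg Prod.fst hh
    simp only [outerA] at this
    omega
  have : dmp p (outerA p) = (p.1 - 1, p.2 - 1) := by
    simp only [dmp, outerA]
    exact Prod.ext (dm_outer1 hp1 hpno) (dm_outer2 hp1 hpno)
  rw [← this]
  exact Finset.mem_image_of_mem _ (Finset.mem_erase.mpr ⟨hne, hop⟩)

include hM hno hp hop in
lemma del_card : (delF p A).card + 1 = A.card := by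
  have hp1 := p1_ge hM hop hp
  have hpno := hno p hp
  rw [delF, Finset.card_image_of_injOn, Finset.card_erase_of_mem hp]
  · have : 1 ≤ A.card := Finset.card_pos.mpr ⟨p, hp⟩
    omega
  · intro r hr s hs hh
    have hrA := Finset.mem_of_mem_erase hr
    have hsA := Finset.mem_of_mem_erase hs
    obtain ⟨e1, e2, e3, e4⟩ := endpoints_ne hM hp hrA (Finset.ne_of_mem_erase hr)
    obtain ⟨f1, f2, f3, f4⟩ := endpoints_ne hM hp hsA (Finset.ne_of_mem_erase hs)
    have h1 : r.1 = s.1 := dm_inj hpno e1 e2 f1 f2 (congrArg Prod.fst hh)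
    exact share_eq hM hrA hsA (Or.inl h1)

include hM hno hp hop in
lemma rt2 : insF (p.1 - 1, p.2 - 1) (delF p A) = A := by
  have hp1 := p1_ge hM hop hp
  have hpno := hno p hp
  unfold insF delF
  rw [Finset.image_image]
  have himg : (A.erase p).image (ump (p.1 - 1, p.2 - 1) ∘ dmp p) = A.erase p := by
    rw [Finset.image_congr (g := id), Finset.image_id]
    intro r hr
    have hrA := Finset.mem_of_mem_erase hr
    obtain ⟨e1, e2, e3, e4⟩ := endpoints_ne hM hp hrA (Finset.ne_of_mem_erase hr)
    show ump (p.1 - 1, p.2 - 1) (dmp p r) = r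
    exact Prod.ext (um_dm hp1 hpno e1 e2) (um_dm hp1 hpno e3 e4)
  rw [himg]
  have hpr : ((p.1 - 1 : ℕ), (p.2 - 1 : ℕ)) = (p.1 - 1, p.2 - 1) := rfl
  have hnew : ((p.1 - 1) + 1, (p.2 - 1) + 1) = p := by
    have : 1 ≤ p.2 := by omega
    exact Prod.ext (by simp; omega) (by simp; omega)
  rw [hnew, Finset.insert_erase hp]

end Del

section RT1
open Stmt12
variable {k m n : ℕ} {A : Finset (ℕ × ℕ)} {q : ℕ × ℕ}

lemma rt1 (hM : IsPartialMatching m A) (hq : q ∈ A) :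
    delF (q.1+1, q.2+1) (insF q A) = A := by
  have h12 : q.1 < q.2 := (hM.1 q hq).2.1
  unfold delF insF
  rw [Finset.erase_insert (new_not_mem_image h12 A), Finset.image_image]
  rw [Finset.image_congr (g := id), Finset.image_id]
  intro r hr
  show dmp (q.1+1, q.2+1) (ump q r) = r
  exact Prod.ext (dm_um h12) (dm_um h12)

end RT1

namespace Stmt12
variable {q : ℕ × ℕ} {x : ℕ}
lemma um_inner1 (h : q.1 + 1 < q.2) : um q (q.1+1) = q.1 + 2 := by
  unfold um; split_ifs <;> omega
lemma um_inner2 (h : q.1 + 1 < q.2) : um q (q.2 - 1) = q.2 := by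
  unfold um; split_ifs <;> omega
lemma ump_injective : Function.Injective (ump q) := fun a b hab =>
  Prod.ext (um_inj (congrArg Prod.fst hab)) (um_inj (congrArg Prod.snd hab))

noncomputable def red (A : Finset (ℕ × ℕ)) : ℕ := (A.filter (fun r => outerA r ∈ A)).card

end Stmt12

section Red
open Stmt12
variable {k m n : ℕ} {A : Finset (ℕ × ℕ)} {p q : ℕ × ℕ}

lemma mem_insF {r' : ℕ × ℕ} :
    r' ∈ insF q A ↔ r' = (q.1+1, q.2+1) ∨ ∃ r ∈ A, ump q r = r' := by
  simp [insF, Finset.mem_insert, Finset.mem_image]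

lemma ins_filter (hM : IsPartialMatching m A) (hno : NoOneArc A) (hq : q ∈ A) :
    (insF q A).filter (fun r => outerA r ∈ insF q A)
      = insert (q.1+1, q.2+1) ((A.filter (fun r => outerA r ∈ A)).image (ump q)) := by
  have h12 : q.1 < q.2 := (hM.1 q hq).2.1
  have h12' : q.1 + 1 < q.2 := hno q hq
  ext r'
  simp only [Finset.mem_filter, Finset.mem_insert, Finset.mem_image]
  constructor
  · rintro ⟨hmem, hout⟩
    rcases mem_insF.mp hmem with rfl | ⟨r, hr, rfl⟩
    · exact Or.inl rfl
    · right
      have b1 : 1 ≤ r.1 := (hM.1 r hr).1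
      have hge : r.1 ≤ um q r.1 := um_ge
      rcases mem_insF.mp hout with hnew | ⟨s, hs, hsq⟩
      · have c1 := congrArg Prod.fst hnew
        have c2 := congrArg Prod.snd hnew
        simp only [outerA, ump] at c1 c2
        have e1 : um q r.1 = q.1 + 2 := by omega
        have e2 : um q r.2 = q.2 := by omega
        have hr1 := um_eq_q1add2 h12' e1
        have hr2 := um_eq_q2 h12' e2
        refine ⟨r, ⟨hr, ?_⟩, rfl⟩
        have hoq : outerA r = q := by
          simp only [outerA]
          exact Prod.ext (by simp; omega) (by simp; omega)
        rw [hoq]; exact hq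
      · have c1 := congrArg Prod.fst hsq
        have c2 := congrArg Prod.snd hsq
        simp only [outerA, ump] at c1 c2
        have e1 : um q s.1 + 1 = um q r.1 := by omega
        have e2 : um q r.2 + 1 = um q s.2 := by omega
        obtain ⟨g1, -, -⟩ := um_succ_eq h12 e1
        obtain ⟨g2, -, -⟩ := um_succ_eq h12 e2
        refine ⟨r, ⟨hr, ?_⟩, rfl⟩
        have hos : outerA r = s := by
          simp only [outerA]
          exact Prod.ext (by simp; omega) (by simp; omega)
        rw [hos]; exact hs
  · rintro (rfl | ⟨r, hrf, rfl⟩)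
    · refine ⟨mem_insF.mpr (Or.inl rfl), ?_⟩
      have : outerA (q.1+1, q.2+1) = ump q q := by
        simp only [outerA, ump]
        exact Prod.ext (by simp [um_self1 h12]) (by simp [um_self2 h12])
      rw [this]
      exact mem_insF.mpr (Or.inr ⟨q, hq, rfl⟩)
    · obtain ⟨hr, hro⟩ := hrf
      have b1 : 1 ≤ r.1 := (hM.1 r hr).1
      refine ⟨mem_insF.mpr (Or.inr ⟨r, hr, rfl⟩), ?_⟩
      by_cases hc : outerA r = q
      · have c1 := congrArg Prod.fst hc
        have c2 := congrArg Prod.snd hc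
        simp only [outerA] at c1 c2
        have hr1 : r.1 = q.1 + 1 := by omega
        have hr2 : r.2 = q.2 - 1 := by omega
        have hout : outerA (ump q r) = (q.1+1, q.2+1) := by
          have u1 : um q r.1 = q.1 + 2 := by rw [hr1]; exact um_inner1 h12'
          have u2 : um q r.2 = q.2 := by rw [hr2]; exact um_inner2 h12'
          simp only [outerA, ump]
          exact Prod.ext (by simp [u1]) (by simp [u2])
        rw [hout]
        exact mem_insF.mpr (Or.inl rfl)
      · have hs : outerA r ∈ A := hro
        have hq_s1 : q.1 ≠ (outerA r).1 := fun h =>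
          hc (share_eq hM hro hq (Or.inl h.symm))
        have hq_s2 : q.2 ≠ (outerA r).2 := fun h =>
          hc (share_eq hM hro hq (Or.inr (Or.inr (Or.inr h.symm))))
        have hq2_r1 : q.2 ≠ r.1 := fun h => by
          have hqr := share_eq hM hq hr (Or.inr (Or.inr (Or.inl h)))
          rw [← hqr] at h
          omega
        have hq1_r2 : q.1 ≠ r.2 := fun h => by
          have hqr := share_eq hM hq hr (Or.inr (Or.inl h))
          rw [← hqr] at h
          omega
        have hs1 : (outerA r).1 + 1 = r.1 := by simp only [outerA]; omega
        have hs2 : (outerA r).2 = r.2 + 1 := rfl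
        have e1 : um q r.1 = um q (outerA r).1 + 1 := by
          rw [← hs1]
          exact um_succ hq_s1 (by rw [hs1]; exact hq2_r1)
        have e2 : um q (outerA r).2 = um q r.2 + 1 := by
          rw [hs2]
          exact um_succ hq1_r2 (by rw [← hs2]; exact hq_s2)
        have hout : outerA (ump q r) = ump q (outerA r) := by
          simp only [outerA, ump] at e1 e2 ⊢
          exact Prod.ext (by simp; omega) (by simp; omega)
        rw [hout]
        exact mem_insF.mpr (Or.inr ⟨outerA r, hs, rfl⟩)

lemma red_ins (hM : IsPartialMatching m A) (hno : NoOneArc A) (hq : q ∈ A) :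
    red (insF q A) = red A + 1 := by
  have h12 : q.1 < q.2 := (hM.1 q hq).2.1
  rw [red, ins_filter hM hno hq,
    Finset.card_insert_of_notMem (new_not_mem_image h12 _),
    Finset.card_image_of_injective _ ump_injective, red]

lemma red_del (hM : IsPartialMatching (m+2) A) (hno : NoOneArc A) (hp : p ∈ A)
    (hop : outerA p ∈ A) : red (delF p A) + 1 = red A := by
  have h := red_ins (del_matching hM hno hp hop) (del_noone hM hno hp hop)
    (mark_mem_del hM hno hp hop)
  rw [rt2 hM hno hp hop] at h
  omega

end Red

section Count
open Stmt12

variable {k m n j b : ℕ} {A : Finset (ℕ × ℕ)}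

open Classical in
noncomputable def aT (k n j : ℕ) : Finset (Finset (ℕ × ℕ)) :=
  ((Finset.Icc 1 n ×ˢ Finset.Icc 1 n).powerset).filter
    (fun A => RNAStruct k 1 n A ∧ A.card = j)

noncomputable def aS (k n j b : ℕ) : Finset (Finset (ℕ × ℕ)) :=
  (aT k n j).filter (fun A => red A = b)

lemma subset_grid (hM : IsPartialMatching n A) :
    A ⊆ Finset.Icc 1 n ×ˢ Finset.Icc 1 n := by
  intro r hr
  obtain ⟨h1, h2, h3⟩ := hM.1 r hr
  exact Finset.mem_product.mpr ⟨Finset.mem_Icc.mpr ⟨h1, by omega⟩,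
    Finset.mem_Icc.mpr ⟨by omega, h3⟩⟩

lemma mem_aT : A ∈ aT k n j ↔ RNAStruct k 1 n A ∧ A.card = j := by
  classical
  simp only [aT, Finset.mem_filter, Finset.mem_powerset]
  exact ⟨fun h => h.2, fun h => ⟨subset_grid h.1.1, h⟩⟩

lemma mem_aS : A ∈ aS k n j b ↔ (RNAStruct k 1 n A ∧ A.card = j) ∧ red A = b := by
  rw [aS, Finset.mem_filter, mem_aT]

lemma Tcount_eq (k n j : ℕ) : Tcount k 1 n j = (aT k n j).card := by
  have hset : {A : Finset (ℕ × ℕ) | RNAStruct k 1 n A ∧ A.card = j} = ↑(aT k n j) := by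
    ext A
    simp only [Set.mem_setOf_eq, Finset.mem_coe, mem_aT]
  calc Tcount k 1 n j
      = ({A : Finset (ℕ × ℕ) | RNAStruct k 1 n A ∧ A.card = j} : Set _).ncard :=
        Nat.card_coe_set_eq _
    _ = (aT k n j).card := by rw [hset, Set.ncard_coe_finset]

lemma core_iff (hM : IsPartialMatching n A) : IsCore A ↔ red A = 0 := by
  rw [red, Finset.card_eq_zero, Finset.filter_eq_empty_iff]
  constructor
  · intro hc r hr hout
    have h1 : 1 ≤ r.1 := (hM.1 r hr).1
    have h2 : r.1 < r.2 := (hM.1 r hr).2.1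
    apply hc (outerA r) hout
    have : ((outerA r).1 + 1, (outerA r).2 - 1) = r := by
      simp only [outerA]
      exact Prod.ext (by simp; omega) (by simp)
    rw [this]; exact hr
  · intro hc r hr hin
    have h1 : 1 ≤ r.1 := (hM.1 r hr).1
    have h2 : r.1 < r.2 := (hM.1 r hr).2.1
    apply hc hin
    have : outerA (r.1 + 1, r.2 - 1) = r := by
      simp only [outerA]
      exact Prod.ext (by simp) (by simp; omega)
    rw [this]; exact hr

lemma Ccount_eq (k n h : ℕ) : Ccount k n h = (aS k n h 0).card := by
  have hset : {A : Finset (ℕ × ℕ) | RNAStruct k 1 n A ∧ IsCore A ∧ A.card = h}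
      = ↑(aS k n h 0) := by
    ext A
    simp only [Set.mem_setOf_eq, Finset.mem_coe, mem_aS]
    constructor
    · rintro ⟨h1, h2, h3⟩
      exact ⟨⟨h1, h3⟩, (core_iff h1.1).mp h2⟩
    · rintro ⟨⟨h1, h3⟩, h2⟩
      exact ⟨h1, (core_iff h1.1).mpr h2, h3⟩
  calc Ccount k n h
      = ({A : Finset (ℕ × ℕ) | RNAStruct k 1 n A ∧ IsCore A ∧ A.card = h} : Set _).ncard :=
        Nat.card_coe_set_eq _
    _ = (aS k n h 0).card := by rw [hset, Set.ncard_coe_finset]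

lemma two_card_le (hM : IsPartialMatching n A) : 2 * A.card ≤ n := by
  classical
  have hsub : A.biUnion (fun r => {r.1, r.2}) ⊆ Finset.Icc 1 n := by
    intro v hv
    obtain ⟨r, hr, hv⟩ := Finset.mem_biUnion.mp hv
    obtain ⟨h1, h2, h3⟩ := hM.1 r hr
    rcases Finset.mem_insert.mp hv with rfl | hv
    · exact Finset.mem_Icc.mpr ⟨h1, by omega⟩
    · simp only [Finset.mem_singleton] at hv
      subst hv
      exact Finset.mem_Icc.mpr ⟨by omega, h3⟩
  have hdisj : ∀ r ∈ A, ∀ s ∈ A, r ≠ s →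
      Disjoint ({r.1, r.2} : Finset ℕ) {s.1, s.2} := by
    intro r hr s hs hrs
    obtain ⟨a, b, c, d⟩ := hM.2 r hr s hs hrs
    simp only [Finset.disjoint_left, Finset.mem_insert, Finset.mem_singleton]
    rintro v (rfl | rfl) hv' <;> rcases hv' with h | h
    · exact a h
    · exact b h
    · exact c h
    · exact d h
  have hcard : (A.biUnion (fun r => {r.1, r.2})).card = 2 * A.card := by
    rw [Finset.card_biUnion hdisj]
    rw [Finset.sum_congr rfl (fun r hr => Finset.card_pair (hM.1 r hr).2.1.ne),
      Finset.sum_const, smul_eq_mul, mul_comm]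
  have hle := Finset.card_le_card hsub
  rw [hcard] at hle
  calc 2 * A.card ≤ (Finset.Icc 1 n).card := hle
    _ = n := by rw [Nat.card_Icc]; omega

lemma aS_card_zero (h : n < 2 * j) : (aS k n j b).card = 0 := by
  rw [Finset.card_eq_zero]
  apply Finset.eq_empty_of_forall_notMem
  intro A hA
  obtain ⟨⟨hstr, hcard⟩, -⟩ := mem_aS.mp hA
  have := two_card_le hstr.1
  omega

lemma red_lt (hM : IsPartialMatching n A) (hne : A.Nonempty) : red A < A.card := by
  classical
  have hne' : (A.image Prod.fst).Nonempty := hne.image _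
  obtain ⟨r, hr, hra⟩ := Finset.mem_image.mp (Finset.min'_mem _ hne')
  have hrn : outerA r ∉ A := by
    intro hin
    have h1 := Finset.min'_le _ _ (Finset.mem_image_of_mem Prod.fst hin)
    have h2 : 1 ≤ r.1 := (hM.1 r hr).1
    have h3 : 1 ≤ (outerA r).1 := (hM.1 _ hin).1
    simp only [outerA] at h1 h3
    omega
  rw [red]
  exact Finset.card_lt_card ⟨Finset.filter_subset _ _,
    fun hsub => hrn (Finset.mem_filter.mp (hsub hr)).2⟩

lemma partitionT (k n j : ℕ) (hj : 1 ≤ j) :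
    (aT k n j).card = ∑ b ∈ Finset.range j, (aS k n j b).card := by
  classical
  have hmem : ∀ A ∈ aT k n j, red A ∈ Finset.range j := by
    intro A hA
    obtain ⟨hstr, hcard⟩ := mem_aT.mp hA
    have hne : A.Nonempty := Finset.card_pos.mp (by omega)
    have := red_lt hstr.1 hne
    rw [Finset.mem_range]; omega
  rw [Finset.card_eq_sum_card_fiberwise hmem]
  apply Finset.sum_congr rfl
  intro b _
  rfl

end Count

section Step
open Stmt12

lemma step (k m j b : ℕ) :
    (b + 1) * (aS k (m+2) (j+1) (b+1)).card = j * (aS k m j b).card := by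
  classical
  have h1 : ((aS k (m+2) (j+1) (b+1)).sigma
      (fun A => A.filter (fun r => outerA r ∈ A))).card
      = (b+1) * (aS k (m+2) (j+1) (b+1)).card := by
    rw [Finset.card_sigma]
    calc ∑ A ∈ aS k (m+2) (j+1) (b+1), (A.filter (fun r => outerA r ∈ A)).card
        = ∑ _A ∈ aS k (m+2) (j+1) (b+1), (b+1) :=
          Finset.sum_congr rfl (fun A hA => (mem_aS.mp hA).2)
      _ = (b+1) * (aS k (m+2) (j+1) (b+1)).card := by
          rw [Finset.sum_const, smul_eq_mul, mul_comm]
  have h2 : ((aS k m j b).sigma (fun A => A)).card = j * (aS k m j b).card := by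
    rw [Finset.card_sigma]
    calc ∑ A ∈ aS k m j b, A.card
        = ∑ _A ∈ aS k m j b, j := Finset.sum_congr rfl (fun A hA => (mem_aS.mp hA).1.2)
      _ = j * (aS k m j b).card := by rw [Finset.sum_const, smul_eq_mul, mul_comm]
  rw [← h1, ← h2]
  apply Finset.card_bij
    (fun x _ => (⟨delF x.2 x.1, (x.2.1 - 1, x.2.2 - 1)⟩ : Σ _ : Finset (ℕ × ℕ), ℕ × ℕ))
  · rintro ⟨A, p⟩ hx
    dsimp only at hx ⊢
    have hx1 : A ∈ aS k (m+2) (j+1) (b+1) := (Finset.mem_sigma.mp hx).1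
    have hx2 : p ∈ A.filter (fun r => outerA r ∈ A) := (Finset.mem_sigma.mp hx).2
    obtain ⟨⟨hstr, hcard⟩, hred⟩ := mem_aS.mp hx1
    obtain ⟨hM, hnc, hno⟩ := rna_iff.mp hstr
    obtain ⟨hpm, hop⟩ := Finset.mem_filter.mp hx2
    refine Finset.mem_sigma.mpr ⟨mem_aS.mpr ⟨⟨rna_iff.mpr
      ⟨del_matching hM hno hpm hop, del_nocross hM hno hpm hop hnc,
        del_noone hM hno hpm hop⟩, ?_⟩, ?_⟩, ?_⟩
    · exact (by have := del_card hM hno hpm hop; omega : (delF p A).card = j)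
    · exact (by have := red_del hM hno hpm hop; omega : red (delF p A) = b)
    · exact mark_mem_del hM hno hpm hop
  · rintro ⟨A1, p1⟩ hx1 ⟨A2, p2⟩ hx2 heq
    dsimp only at hx1 hx2 heq ⊢
    have hy1 : A1 ∈ aS k (m+2) (j+1) (b+1) := (Finset.mem_sigma.mp hx1).1
    have hy2 : p1 ∈ A1.filter (fun r => outerA r ∈ A1) := (Finset.mem_sigma.mp hx1).2
    obtain ⟨⟨hstr1, hcard1⟩, hred1⟩ := mem_aS.mp hy1
    obtain ⟨hM1, hnc1, hno1⟩ := rna_iff.mp hstr1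
    obtain ⟨hp1m, hop1⟩ := Finset.mem_filter.mp hy2
    have hz1 : A2 ∈ aS k (m+2) (j+1) (b+1) := (Finset.mem_sigma.mp hx2).1
    have hz2 : p2 ∈ A2.filter (fun r => outerA r ∈ A2) := (Finset.mem_sigma.mp hx2).2
    obtain ⟨⟨hstr2, hcard2⟩, hred2⟩ := mem_aS.mp hz1
    obtain ⟨hM2, hnc2, hno2⟩ := rna_iff.mp hstr2
    obtain ⟨hp2m, hop2⟩ := Finset.mem_filter.mp hz2
    rw [Sigma.mk.inj_iff] at heq
    have hmark := eq_of_heq heq.2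
    have g11 : 2 ≤ p1.1 := p1_ge hM1 hop1 hp1m
    have g21 : 2 ≤ p2.1 := p1_ge hM2 hop2 hp2m
    have g12 : p1.1 + 1 < p1.2 := hno1 p1 hp1m
    have g22 : p2.1 + 1 < p2.2 := hno2 p2 hp2m
    have c1 := congrArg Prod.fst hmark
    have c2 := congrArg Prod.snd hmark
    simp only at c1 c2
    have hpp : p1 = p2 := Prod.ext (by omega) (by omega)
    have hAA : A1 = A2 := by
      rw [← rt2 hM1 hno1 hp1m hop1, ← rt2 hM2 hno2 hp2m hop2, heq.1, hpp]
    subst hpp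
    subst hAA
    rfl
  · rintro ⟨A, q⟩ hy
    have hy1 : A ∈ aS k m j b := (Finset.mem_sigma.mp hy).1
    have hy2 : q ∈ A := (Finset.mem_sigma.mp hy).2
    obtain ⟨⟨hstr, hcard⟩, hred⟩ := mem_aS.mp hy1
    obtain ⟨hM, hnc, hno⟩ := rna_iff.mp hstr
    have hqm : q ∈ A := hy2
    have h12 : q.1 < q.2 := (hM.1 q hqm).2.1
    refine ⟨⟨insF q A, (q.1+1, q.2+1)⟩, ?_, ?_⟩
    · refine Finset.mem_sigma.mpr ⟨mem_aS.mpr ⟨⟨rna_iff.mpr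
        ⟨ins_matching hM hqm, ins_nocross hM hqm hnc, ins_noone hno hqm⟩, ?_⟩, ?_⟩, ?_⟩
      · rw [ins_card hM hqm, hcard]
      · rw [red_ins hM hno hqm, hred]
      · refine Finset.mem_filter.mpr ⟨mem_insF.mpr (Or.inl rfl), ?_⟩
        have hob : outerA (q.1+1, q.2+1) = ump q q := by
          simp only [outerA, ump]
          exact Prod.ext (by simp [um_self1 h12]) (by simp [um_self2 h12])
        rw [hob]
        exact mem_insF.mpr (Or.inr ⟨q, hqm, rfl⟩)
    · dsimp only
      rw [rt1 hM hqm]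
      rw [Sigma.mk.inj_iff]
      refine ⟨rfl, heq_of_eq (Prod.ext (by simp) (by simp))⟩
end Step

section Formula
open Stmt12

lemma Sval (k : ℕ) : ∀ b m j, b < j →
    (aS k m j b).card = Nat.choose (j-1) b * (aS k (m - 2*b) (j - b) 0).card := by
  intro b
  induction b with
  | zero => intro m j hj; simp
  | succ b ih =>
    intro m j hj
    obtain ⟨j', rfl⟩ : ∃ j', j = j' + 1 := ⟨j - 1, by omega⟩
    have hbj' : b < j' := by omega
    by_cases hm : 2 ≤ m
    · obtain ⟨m', rfl⟩ : ∃ m', m = m' + 2 := ⟨m - 2, by omega⟩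
      have hstep := step k m' j' b
      rw [ih m' j' hbj'] at hstep
      have harg1 : m' + 2 - 2 * (b+1) = m' - 2 * b := by omega
      have harg2 : j' + 1 - (b + 1) = j' - b := by omega
      rw [harg1, harg2]
      have hj1 : j' - 1 + 1 = j' := by omega
      have hch : j' * Nat.choose (j'-1) b = (b+1) * Nat.choose (j'+1-1) (b+1) := by
        calc j' * Nat.choose (j'-1) b
            = (j'-1).succ * Nat.choose (j'-1) b := by rw [Nat.succ_eq_add_one, hj1]
          _ = Nat.choose (j'-1+1) (b+1) * (b+1) := Nat.add_one_mul_choose_eq _ _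
          _ = (b+1) * Nat.choose (j'+1-1) (b+1) := by rw [hj1, Nat.add_sub_cancel, mul_comm]
      apply Nat.eq_of_mul_eq_mul_left (show 0 < b+1 by omega)
      calc (b+1) * (aS k (m'+2) (j'+1) (b+1)).card
          = j' * (Nat.choose (j'-1) b * (aS k (m'-2*b) (j'-b) 0).card) := hstep
        _ = (j' * Nat.choose (j'-1) b) * (aS k (m'-2*b) (j'-b) 0).card :=
            (mul_assoc _ _ _).symm
        _ = ((b+1) * Nat.choose (j'+1-1) (b+1)) * (aS k (m'-2*b) (j'-b) 0).card := by
            rw [hch]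
        _ = (b+1) * (Nat.choose (j'+1-1) (b+1) * (aS k (m'-2*b) (j'-b) 0).card) :=
            mul_assoc _ _ _
    · have hz1 : (aS k m (j'+1) (b+1)).card = 0 := aS_card_zero (by omega)
      have hz2 : (aS k (m - 2*(b+1)) (j'+1 - (b+1)) 0).card = 0 :=
        aS_card_zero (by omega)
      rw [hz1, hz2, mul_zero]

lemma Tformula (k n j : ℕ) (hj : 1 ≤ j) :
    (aT k n j).card
      = ∑ b ∈ Finset.range j, Nat.choose (j-1) b * (aS k (n - 2*b) (j-b) 0).card := by
  rw [partitionT k n j hj]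
  exact Finset.sum_congr rfl fun b hb => Sval k b n j (Finset.mem_range.mp hb)

lemma Tformula' (k n j : ℕ) (hj : 1 ≤ j) :
    (Tcount k 1 n j : ℤ)
      = ∑ b ∈ Finset.range j,
          (Nat.choose (j-1) b : ℤ) * (Ccount k (n - 2*b) (j-b) : ℤ) := by
  rw [Tcount_eq, Tformula k n j hj]
  push_cast
  exact Finset.sum_congr rfl fun b _ => by rw [Ccount_eq]

end Formula

/-- C_k(n,h) = Σ_{b=0}^{h-1} (-1)^{h-b-1} C(h-1,b)
T_{k,1}(n-2h+2b+2, b+1). -/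
theorem stmt12 (k n h : ℕ) (hk : 2 ≤ k) (hh : 1 ≤ h) :
    (Ccount k n h : ℤ) = ∑ b ∈ Finset.range h,
      (-1 : ℤ) ^ (h - b - 1) * (Nat.choose (h - 1) b : ℤ) *
        (Tcount k 1 (n - 2 * (h - b - 1)) (b + 1) : ℤ) := by
  have key : ∀ c, c < h →
      (∑ b ∈ Finset.range h, (if c ≤ b then
          ((-1:ℤ) ^ (h - b - 1) * ((h-1).choose b : ℤ) * (b.choose c : ℤ)) else 0))
        = if c = h - 1 then 1 else 0 := by
    intro c hc
    have hsplit : (Finset.range h).filter (fun b => c ≤ b) = Finset.Ico c h := by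
      ext x
      simp only [Finset.mem_filter, Finset.mem_range, Finset.mem_Ico]
      omega
    rw [← Finset.sum_filter, hsplit, Finset.sum_Ico_eq_sum_range]
    have hN : h - c = (h - 1 - c) + 1 := by omega
    set N := h - 1 - c with hNdef
    rw [hN]
    have hterm : ∀ e ∈ Finset.range (N+1),
        ((-1:ℤ) ^ (h - (c+e) - 1) * ((h-1).choose (c+e) : ℤ) * ((c+e).choose c : ℤ))
          = ((h-1).choose c : ℤ) * ((-1:ℤ)^N * ((-1:ℤ)^e * (N.choose e : ℤ))) := by
      intro e he
      have he' : e ≤ N := by rw [Finset.mem_range] at he; omega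
      have hmul : (h-1).choose (c+e) * (c+e).choose c = (h-1).choose c * N.choose e := by
        rw [Nat.choose_mul (show c ≤ c+e by omega)]
        congr 2 <;> omega
      have hz : ((h-1).choose (c+e) : ℤ) * ((c+e).choose c : ℤ)
          = ((h-1).choose c : ℤ) * (N.choose e : ℤ) := by exact_mod_cast hmul
      have h1 : h - (c+e) - 1 = N - e := by omega
      have hsq : (-1:ℤ)^e * (-1:ℤ)^e = 1 := by
        rw [← pow_add, show e + e = 2*e by omega, pow_mul]
        norm_num
      have h2 : (-1:ℤ)^(N-e) * (-1:ℤ)^e = (-1:ℤ)^N := by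
        rw [← pow_add]
        congr 1
        omega
      have hsign : (-1:ℤ)^(N-e) = (-1:ℤ)^N * (-1:ℤ)^e := by
        calc (-1:ℤ)^(N-e) = (-1:ℤ)^(N-e) * ((-1:ℤ)^e * (-1:ℤ)^e) := by rw [hsq, mul_one]
          _ = ((-1:ℤ)^(N-e) * (-1:ℤ)^e) * (-1:ℤ)^e := by ring
          _ = (-1:ℤ)^N * (-1:ℤ)^e := by rw [h2]
      rw [h1, hsign]
      linear_combination ((-1:ℤ)^N * (-1:ℤ)^e) * hz
    calc ∑ e ∈ Finset.range (N+1),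
          ((-1:ℤ) ^ (h - (c+e) - 1) * ((h-1).choose (c+e) : ℤ) * ((c+e).choose c : ℤ))
        = ∑ e ∈ Finset.range (N+1),
            ((h-1).choose c : ℤ) * ((-1:ℤ)^N * ((-1:ℤ)^e * (N.choose e : ℤ))) :=
          Finset.sum_congr rfl hterm
      _ = ((h-1).choose c : ℤ) * ((-1:ℤ)^N *
            ∑ e ∈ Finset.range (N+1), ((-1:ℤ)^e * (N.choose e : ℤ))) := by
          rw [Finset.mul_sum, Finset.mul_sum]
      _ = ((h-1).choose c : ℤ) * ((-1:ℤ)^N * (if N = 0 then 1 else 0)) := by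
          rw [Int.alternating_sum_range_choose]
      _ = if c = h - 1 then 1 else 0 := by
          by_cases hc1 : c = h - 1
          · have : N = 0 := by omega
            simp [hc1, this]
          · have : N ≠ 0 := by omega
            simp [hc1, this]
  symm
  calc ∑ b ∈ Finset.range h,
        (-1 : ℤ) ^ (h - b - 1) * ((h - 1).choose b : ℤ) *
          (Tcount k 1 (n - 2 * (h - b - 1)) (b + 1) : ℤ)
      = ∑ b ∈ Finset.range h, ∑ c ∈ Finset.range (b+1),
          (-1 : ℤ) ^ (h - b - 1) * ((h - 1).choose b : ℤ) *
            ((b.choose c : ℤ) * (Ccount k (n - 2 * (h - b - 1) - 2*c) (b+1-c) : ℤ)) := by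
        refine Finset.sum_congr rfl fun b hb => ?_
        rw [Tformula' k (n - 2 * (h - b - 1)) (b+1) (by omega), Finset.mul_sum]
        simp only [Nat.add_sub_cancel]
    _ = ∑ b ∈ Finset.range h, ∑ c ∈ Finset.range (b+1),
          (if c ≤ b then
            ((-1:ℤ) ^ (h - b - 1) * ((h-1).choose b : ℤ) * (b.choose c : ℤ)) else 0)
            * (Ccount k (n - 2 * (h - c - 1)) (c+1) : ℤ) := by
        refine Finset.sum_congr rfl fun b hb => ?_
        have hb' : b < h := Finset.mem_range.mp hb
        rw [← Finset.sum_range_reflect]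
        refine Finset.sum_congr rfl fun c hc => ?_
        have hc' : c < b + 1 := Finset.mem_range.mp hc
        rw [show b + 1 - 1 - c = b - c by omega]
        rw [if_pos (show c ≤ b by omega)]
        rw [show n - 2 * (h - b - 1) - 2*(b-c) = n - 2 * (h - c - 1) by omega]
        rw [show b + 1 - (b - c) = c + 1 by omega]
        rw [Nat.choose_symm (show c ≤ b by omega)]
        ring
    _ = ∑ b ∈ Finset.range h, ∑ c ∈ Finset.range h,
          (if c ≤ b then
            ((-1:ℤ) ^ (h - b - 1) * ((h-1).choose b : ℤ) * (b.choose c : ℤ)) else 0)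
            * (Ccount k (n - 2 * (h - c - 1)) (c+1) : ℤ) := by
        refine Finset.sum_congr rfl fun b hb => ?_
        have hb' : b < h := Finset.mem_range.mp hb
        refine Finset.sum_subset (Finset.range_subset_range.mpr (by omega)) fun c hc hcn => ?_
        have : ¬ c ≤ b := fun hle => hcn (Finset.mem_range.mpr (by omega))
        rw [if_neg this, zero_mul]
    _ = ∑ c ∈ Finset.range h, ∑ b ∈ Finset.range h,
          (if c ≤ b then
            ((-1:ℤ) ^ (h - b - 1) * ((h-1).choose b : ℤ) * (b.choose c : ℤ)) else 0)
            * (Ccount k (n - 2 * (h - c - 1)) (c+1) : ℤ) := Finset.sum_comm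
    _ = ∑ c ∈ Finset.range h,
          (∑ b ∈ Finset.range h, (if c ≤ b then
            ((-1:ℤ) ^ (h - b - 1) * ((h-1).choose b : ℤ) * (b.choose c : ℤ)) else 0))
            * (Ccount k (n - 2 * (h - c - 1)) (c+1) : ℤ) := by
        refine Finset.sum_congr rfl fun c hc => ?_
        rw [Finset.sum_mul]
    _ = ∑ c ∈ Finset.range h,
          (if c = h - 1 then (1:ℤ) else 0) * (Ccount k (n - 2 * (h - c - 1)) (c+1) : ℤ) :=
        Finset.sum_congr rfl fun c hc => by rw [key c (Finset.mem_range.mp hc)]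
    _ = ∑ c ∈ Finset.range h,
          (if c = h - 1 then (Ccount k (n - 2 * (h - c - 1)) (c+1) : ℤ) else 0) :=
        Finset.sum_congr rfl fun c hc => by rw [ite_mul, one_mul, zero_mul]
    _ = (Ccount k (n - 2 * (h - (h-1) - 1)) ((h-1)+1) : ℤ) := by
        rw [Finset.sum_ite_eq' (Finset.range h) (h-1)
          (fun c => (Ccount k (n - 2 * (h - c - 1)) (c+1) : ℤ))]
        rw [if_pos (Finset.mem_range.mpr (by omega))]
    _ = (Ccount k n h : ℤ) := by
        rw [show n - 2 * (h - (h-1) - 1) = n by omega, show h - 1 + 1 = h by omega]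
end

section
/- For k ≥ 2, the number of k-noncrossing RNA structures on {1,...,n} satisfies T_{k,1}(n, (n-ℓ)/2) = Σ_{b=0}^{⌊n/2⌋} (-1)^b C(n-b, b) f_k(n-2b, ℓ), where T_{k,1}(n,h) counts k-noncrossing partial matchings with no 1-arcs having h arcs and ℓ = n - 2h isolated vertices, and f_k(m,ℓ) counts k-noncrossing partial matchings of {1,...,m} with ℓ isolated vertices (1-arcs allowed). -/
open Finset

section Aux
attribute [local instance] Classical.propDecidable

def Box (n : ℕ) : Finset (Finset (ℕ × ℕ)) := (Finset.Icc 1 n ×ˢ Finset.Icc 1 n).powerset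

lemma mem_box_of_matching {n : ℕ} {A : Finset (ℕ × ℕ)} (h : IsPartialMatching n A) :
    A ∈ Box n := by
  rw [Box, mem_powerset]
  intro p hp
  obtain ⟨h1, h2, h3⟩ := h.1 p hp
  simp only [mem_product, mem_Icc]
  omega

lemma natCard_eq_cnt (P : Finset (ℕ × ℕ) → Prop) (n : ℕ)
    (h : ∀ A, P A → A ∈ Box n) :
    Nat.card {A : Finset (ℕ × ℕ) // P A} = ((Box n).filter P).card := by
  rw [← Nat.card_eq_finsetCard]
  apply Nat.card_congr
  exact (Equiv.subtypeEquivRight (fun A => by simp only [mem_filter]; tauto)).symm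

noncomputable def fcnt (k n ℓ : ℕ) : ℕ :=
  ((Box n).filter (fun A => IsPartialMatching n A ∧ ¬ HasKCrossing k A ∧
    2 * A.card + ℓ = n)).card

lemma fcount_eq (k n ℓ : ℕ) : fcount k n ℓ = fcnt k n ℓ := by
  unfold fcount fcnt
  convert natCard_eq_cnt (fun A => IsPartialMatching n A ∧ ¬ HasKCrossing k A ∧
    2 * A.card + ℓ = n) n (fun _ hA => mem_box_of_matching hA.1) using 2
  congr!

lemma matching_subset {n : ℕ} {A B : Finset (ℕ × ℕ)} (hB : B ⊆ A)
    (h : IsPartialMatching n A) : IsPartialMatching n B :=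
  ⟨fun p hp => h.1 p (hB hp), fun p hp q hq hpq => h.2 p (hB hp) q (hB hq) hpq⟩

lemma two_mul_card_le {n : ℕ} {A : Finset (ℕ × ℕ)} (h : IsPartialMatching n A) :
    2 * A.card ≤ n := by
  classical
  have hdisj : ∀ p ∈ A, ∀ q ∈ A, p ≠ q →
      Disjoint ({p.1, p.2} : Finset ℕ) {q.1, q.2} := by
    intro p hp q hq hpq
    obtain ⟨a, b, c, d⟩ := h.2 p hp q hq hpq
    simp only [Finset.disjoint_left, mem_insert, mem_singleton]
    rintro x (rfl | rfl) <;> rintro (h' | h') <;> omega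
  have hcard : ∀ p ∈ A, ({p.1, p.2} : Finset ℕ).card = 2 := by
    intro p hp
    have := (h.1 p hp).2.1
    rw [Finset.card_insert_of_notMem (by simp; omega), Finset.card_singleton]
  have hsub : A.biUnion (fun p => ({p.1, p.2} : Finset ℕ)) ⊆ Finset.Icc 1 n := by
    intro x hx
    simp only [mem_biUnion, mem_insert, mem_singleton] at hx
    obtain ⟨p, hp, hx⟩ := hx
    obtain ⟨a, b, c⟩ := h.1 p hp
    simp only [mem_Icc]
    rcases hx with rfl | rfl <;> omega
  have := Finset.card_le_card hsub
  rw [Finset.card_biUnion hdisj, Finset.sum_congr rfl hcard, Finset.sum_const,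
    smul_eq_mul] at this
  simpa [Nat.card_Icc, mul_comm] using this

lemma hasK_mono {k : ℕ} {A B : Finset (ℕ × ℕ)} (h : A ⊆ B) :
    HasKCrossing k A → HasKCrossing k B := by
  rintro ⟨f, hf, h1, h2, h3⟩
  exact ⟨f, fun t => h (hf t), h1, h2, h3⟩

lemma hasK_erase_oneArc {k : ℕ} (hk : 2 ≤ k) {A : Finset (ℕ × ℕ)} {p : ℕ × ℕ}
    (hp : p.2 = p.1 + 1) : HasKCrossing k A → HasKCrossing k (A.erase p) := by
  classical
  rintro ⟨f, hf, h1, h2, h3⟩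
  have hne : ∀ t, f t ≠ p := by
    intro t0 ht0
    set a : Fin k := ⟨0, by omega⟩
    set b : Fin k := ⟨1, by omega⟩
    have hab : a ≠ b := by simp [a, b, Fin.ext_iff]
    set s : Fin k := if t0 = a then b else a with hs
    have hst : s ≠ t0 := by
      by_cases h : t0 = a
      · rw [hs, if_pos h, h]
        exact fun e => hab e.symm
      · rw [hs, if_neg h]
        exact fun e => h e.symm
    rcases lt_or_gt_of_ne hst with hlt | hgt
    · have e2 : (f s).2 < (f t0).2 := h2 hlt
      have e3 : (f t0).1 < (f s).2 := h3 t0 s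
      rw [ht0, hp] at e2
      rw [ht0] at e3
      omega
    · have e1 : (f t0).1 < (f s).1 := h1 hgt
      have e3 : (f s).1 < (f t0).2 := h3 s t0
      rw [ht0] at e1
      rw [ht0, hp] at e3
      omega
  exact ⟨f, fun t => Finset.mem_erase.2 ⟨hne t, hf t⟩, h1, h2, h3⟩

section Relabel

variable (g : ℕ → ℕ) (V : ℕ → Prop)

lemma relabel_inj (hg : ∀ ⦃x y⦄, V x → V y → (x < y ↔ g x < g y))
    {x y : ℕ} (hx : V x) (hy : V y) (h : g x = g y) : x = y := by
  rcases lt_trichotomy x y with h' | h' | h'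
  · exact absurd ((hg hx hy).1 h') (by omega)
  · exact h'
  · exact absurd ((hg hy hx).1 h') (by omega)

lemma hasK_image_iff {k : ℕ} (hg : ∀ ⦃x y⦄, V x → V y → (x < y ↔ g x < g y))
    {A : Finset (ℕ × ℕ)} (hA : ∀ p ∈ A, V p.1 ∧ V p.2) :
    HasKCrossing k (A.image (Prod.map g g)) ↔ HasKCrossing k A := by
  classical
  constructor
  · rintro ⟨f, hf, h1, h2, h3⟩
    have hch : ∀ t, ∃ q ∈ A, Prod.map g g q = f t := by
      intro t; exact Finset.mem_image.1 (hf t)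
    choose f' hf' hff' using hch
    have e1 : ∀ t, g (f' t).1 = (f t).1 := fun t => congrArg Prod.fst (hff' t)
    have e2 : ∀ t, g (f' t).2 = (f t).2 := fun t => congrArg Prod.snd (hff' t)
    refine ⟨f', hf', ?_, ?_, ?_⟩
    · intro s t hst
      have := h1 hst
      simp only [← e1] at this
      exact (hg (hA _ (hf' s)).1 (hA _ (hf' t)).1).2 this
    · intro s t hst
      have := h2 hst
      simp only [← e2] at this
      exact (hg (hA _ (hf' s)).2 (hA _ (hf' t)).2).2 this
    · intro s t
      have := h3 s t
      simp only [← e1, ← e2] at this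
      exact (hg (hA _ (hf' s)).1 (hA _ (hf' t)).2).2 this
  · rintro ⟨f, hf, h1, h2, h3⟩
    refine ⟨fun t => Prod.map g g (f t), fun t => Finset.mem_image_of_mem _ (hf t),
      ?_, ?_, ?_⟩
    · intro s t hst
      exact (hg (hA _ (hf s)).1 (hA _ (hf t)).1).1 (h1 hst)
    · intro s t hst
      exact (hg (hA _ (hf s)).2 (hA _ (hf t)).2).1 (h2 hst)
    · intro s t
      exact (hg (hA _ (hf s)).1 (hA _ (hf t)).2).1 (h3 s t)

lemma matching_image (hg : ∀ ⦃x y⦄, V x → V y → (x < y ↔ g x < g y))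
    {m n : ℕ} (hrange : ∀ x, V x → 1 ≤ g x ∧ g x ≤ m)
    {A : Finset (ℕ × ℕ)} (hA : IsPartialMatching n A) (hV : ∀ p ∈ A, V p.1 ∧ V p.2) :
    IsPartialMatching m (A.image (Prod.map g g)) ∧
      (A.image (Prod.map g g)).card = A.card := by
  classical
  have hinj : Set.InjOn (Prod.map g g) A := by
    intro p hp q hq h
    have e1 : g p.1 = g q.1 := congrArg Prod.fst h
    have e2 : g p.2 = g q.2 := congrArg Prod.snd h
    have := relabel_inj g V hg (hV p hp).1 (hV q hq).1 e1
    have := relabel_inj g V hg (hV p hp).2 (hV q hq).2 e2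
    exact Prod.ext (by assumption) (by assumption)
  refine ⟨⟨?_, ?_⟩, Finset.card_image_of_injOn hinj⟩
  · intro p hp
    obtain ⟨q, hq, rfl⟩ := Finset.mem_image.1 hp
    obtain ⟨a, b, c⟩ := hA.1 q hq
    obtain ⟨hV1, hV2⟩ := hV q hq
    exact ⟨(hrange _ hV1).1, (hg hV1 hV2).1 b, (hrange _ hV2).2⟩
  · intro p hp q hq hpq
    obtain ⟨p', hp', rfl⟩ := Finset.mem_image.1 hp
    obtain ⟨q', hq', rfl⟩ := Finset.mem_image.1 hq
    have hne : p' ≠ q' := fun h => hpq (by rw [h])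
    obtain ⟨a, b, c, d⟩ := hA.2 p' hp' q' hq' hne
    obtain ⟨hp1, hp2⟩ := hV p' hp'
    obtain ⟨hq1, hq2⟩ := hV q' hq'
    refine ⟨?_, ?_, ?_, ?_⟩ <;>
      · intro h
        first
        | exact a (relabel_inj g V hg hp1 hq1 h)
        | exact b (relabel_inj g V hg hp1 hq2 h)
        | exact c (relabel_inj g V hg hp2 hq1 h)
        | exact d (relabel_inj g V hg hp2 hq2 h)

end Relabel
end Aux
section Contract
attribute [local instance] Classical.propDecidable

lemma prodmap_fix {g : ℕ → ℕ} {q : ℕ × ℕ} (h1 : g q.1 = q.1) (h2 : g q.2 = q.2) :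
    Prod.map g g q = q := Prod.ext h1 h2

lemma contract_step (k ℓ : ℕ) (hk : 2 ≤ k) {n i : ℕ} (hi : 1 ≤ i) (hin : i + 1 ≤ n)
    {S : Finset (ℕ × ℕ)} (hS : ∀ q ∈ S, 1 ≤ q.1 ∧ q.2 = q.1 + 1 ∧ q.2 < i) :
    ((Box n).filter (fun A => IsPartialMatching n A ∧ ¬ HasKCrossing k A ∧
        2 * A.card + ℓ = n ∧ insert (i, i+1) S ⊆ A)).card
    = ((Box (n-2)).filter (fun A => IsPartialMatching (n-2) A ∧ ¬ HasKCrossing k A ∧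
        2 * A.card + ℓ = n - 2 ∧ S ⊆ A)).card := by
  classical
  set d : ℕ → ℕ := fun x => if x < i then x else x - 2 with hd
  set u : ℕ → ℕ := fun x => if x < i then x else x + 2 with hu
  have hdu : ∀ x, d (u x) = x := by
    intro x; simp only [hd, hu]; split_ifs <;> omega
  have hud : ∀ x, (x < i ∨ i + 2 ≤ x) → u (d x) = x := by
    intro x hx; simp only [hd, hu]; split_ifs <;> omega
  have humono : ∀ ⦃x y : ℕ⦄, x < y → u x < u y := by
    intro x y h; simp only [hu]; split_ifs <;> omega
  have huV : ∀ x, u x < i ∨ i + 2 ≤ u x := by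
    intro x; simp only [hu]; split_ifs <;> omega
  set V : ℕ → Prop := fun x => 1 ≤ x ∧ x ≤ n ∧ (x < i ∨ i + 2 ≤ x) with hV
  set W : ℕ → Prop := fun x => 1 ≤ x ∧ x ≤ n - 2 with hW
  have hgV : ∀ ⦃x y⦄, V x → V y → (x < y ↔ d x < d y) := by
    intro x y hx hy
    constructor
    · intro h
      obtain ⟨-, -, hx3⟩ := hx
      obtain ⟨-, -, hy3⟩ := hy
      simp only [hd]
      split_ifs <;> omega
    · intro h
      have h2 := humono h
      rwa [hud x hx.2.2, hud y hy.2.2] at h2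
  have hgU : ∀ ⦃x y⦄, W x → W y → (x < y ↔ u x < u y) := by
    intro x y _ _
    constructor
    · exact fun h => humono h
    · intro h
      by_contra h'
      push_neg at h'
      rcases eq_or_lt_of_le h' with rfl | h''
      · omega
      · exact absurd (humono h'') (by omega)
  have hrangeV : ∀ x, V x → 1 ≤ d x ∧ d x ≤ n - 2 := by
    intro x hx; obtain ⟨a, b, c⟩ := hx; simp only [hd]; split_ifs <;> omega
  have hrangeW : ∀ x, W x → 1 ≤ u x ∧ u x ≤ n := by
    intro x hx; obtain ⟨a, b⟩ := hx; simp only [hu]; split_ifs <;> omega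
  set p : ℕ × ℕ := (i, i + 1) with hp
  have hfix : ∀ q : ℕ × ℕ, q.1 < i → q.2 < i →
      Prod.map d d q = q ∧ Prod.map u u q = q := by
    intro q h1 h2
    constructor
    · exact prodmap_fix (by simp only [hd, if_pos h1]) (by simp only [hd, if_pos h2])
    · exact prodmap_fix (by simp only [hu, if_pos h1]) (by simp only [hu, if_pos h2])
  apply Finset.card_nbij' (i := fun A => (A.erase p).image (Prod.map d d))
    (j := fun B => insert p (B.image (Prod.map u u)))
  · -- forward maps into
    intro A hA
    rw [Finset.mem_coe, Finset.mem_filter] at hA ⊢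
    obtain ⟨hbox, hM, hK, hcard, hsub⟩ := hA
    have hpA : p ∈ A := hsub (Finset.mem_insert_self _ _)
    have hVend : ∀ q ∈ A.erase p, V q.1 ∧ V q.2 := by
      intro q hq
      obtain ⟨hqp, hqA⟩ := Finset.mem_erase.1 hq
      obtain ⟨b1, b2, b3⟩ := hM.1 q hqA
      obtain ⟨c1, c2, c3, c4⟩ := hM.2 q hqA p hpA hqp
      simp only [hp] at c1 c2 c3 c4
      exact ⟨⟨b1, by omega, by omega⟩, ⟨by omega, b3, by omega⟩⟩
    have hMe : IsPartialMatching n (A.erase p) :=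
      matching_subset (Finset.erase_subset _ _) hM
    obtain ⟨hM', hcard'⟩ := matching_image d V hgV hrangeV hMe hVend
    have hKe : ¬ HasKCrossing k ((A.erase p).image (Prod.map d d)) := by
      intro hKi
      exact hK (hasK_mono (Finset.erase_subset _ _)
        ((hasK_image_iff d V hgV hVend).1 hKi))
    have hA1 : 1 ≤ A.card := Finset.card_pos.2 ⟨p, hpA⟩
    refine ⟨mem_box_of_matching hM', hM', hKe, ?_, ?_⟩
    · rw [hcard', Finset.card_erase_of_mem hpA]; omega
    · intro q hq
      obtain ⟨e1, e2, e3⟩ := hS q hq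
      have hqA : q ∈ A.erase p := by
        refine Finset.mem_erase.2 ⟨?_, hsub (Finset.mem_insert_of_mem hq)⟩
        intro e
        rw [e] at e3
        simp only [hp] at e3
        omega
      have := (hfix q (by omega) e3).1
      exact this ▸ Finset.mem_image_of_mem _ hqA
  · -- backward maps into
    intro B hB
    rw [Finset.mem_coe, Finset.mem_filter] at hB ⊢
    obtain ⟨hbox, hM, hK, hcard, hsub⟩ := hB
    have hWend : ∀ q ∈ B, W q.1 ∧ W q.2 := by
      intro q hq
      obtain ⟨b1, b2, b3⟩ := hM.1 q hq
      exact ⟨⟨b1, by omega⟩, ⟨by omega, b3⟩⟩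
    obtain ⟨hM', hcard'⟩ := matching_image u W hgU hrangeW hM hWend
    have hend' : ∀ q ∈ B.image (Prod.map u u),
        (q.1 < i ∨ i + 2 ≤ q.1) ∧ (q.2 < i ∨ i + 2 ≤ q.2) := by
      intro q hq
      obtain ⟨q', _, rfl⟩ := Finset.mem_image.1 hq
      exact ⟨huV _, huV _⟩
    have hpnot : p ∉ B.image (Prod.map u u) := by
      intro hmem
      have := (hend' p hmem).1
      simp only [hp] at this
      omega
    have hMi : IsPartialMatching n (insert p (B.image (Prod.map u u))) := by
      constructor
      · intro q hq
        rcases Finset.mem_insert.1 hq with rfl | hq'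
        · exact ⟨hi, Nat.lt_succ_self i, hin⟩
        · exact hM'.1 q hq'
      · intro q hq r hr hqr
        rcases Finset.mem_insert.1 hq with rfl | hq' <;>
          rcases Finset.mem_insert.1 hr with rfl | hr'
        · exact absurd rfl hqr
        · have h1 := (hend' r hr').1
          have h2 := (hend' r hr').2
          simp only [hp]
          refine ⟨by omega, by omega, by omega, by omega⟩
        · have h1 := (hend' q hq').1
          have h2 := (hend' q hq').2
          simp only [hp]
          refine ⟨by omega, by omega, by omega, by omega⟩
        · exact hM'.2 q hq' r hr' hqr
    refine ⟨mem_box_of_matching hMi, hMi, ?_, ?_, ?_⟩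
    · intro hKi
      have h1 : HasKCrossing k ((insert p (B.image (Prod.map u u))).erase p) :=
        hasK_erase_oneArc hk rfl hKi
      rw [Finset.erase_insert hpnot] at h1
      exact hK ((hasK_image_iff u W hgU hWend).1 h1)
    · rw [Finset.card_insert_of_notMem hpnot, hcard']
      omega
    · intro q hq
      rcases Finset.mem_insert.1 hq with rfl | hq'
      · exact Finset.mem_insert_self _ _
      · obtain ⟨e1, e2, e3⟩ := hS q hq'
        have := (hfix q (by omega) e3).2
        exact Finset.mem_insert_of_mem (this ▸ Finset.mem_image_of_mem _ (hsub hq'))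
  · -- left inverse
    intro A hA
    rw [Finset.mem_coe, Finset.mem_filter] at hA
    obtain ⟨hbox, hM, hK, hcard, hsub⟩ := hA
    have hpA : p ∈ A := hsub (Finset.mem_insert_self _ _)
    have hVend : ∀ q ∈ A.erase p,
        (q.1 < i ∨ i + 2 ≤ q.1) ∧ (q.2 < i ∨ i + 2 ≤ q.2) := by
      intro q hq
      obtain ⟨hqp, hqA⟩ := Finset.mem_erase.1 hq
      obtain ⟨b1, b2, b3⟩ := hM.1 q hqA
      obtain ⟨c1, c2, c3, c4⟩ := hM.2 q hqA p hpA hqp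
      simp only [hp] at c1 c2 c3 c4
      exact ⟨by omega, by omega⟩
    beta_reduce
    rw [Finset.image_image]
    have heq : Set.EqOn (Prod.map u u ∘ Prod.map d d) id (A.erase p) := by
      intro q hq
      obtain ⟨h1, h2⟩ := hVend q (Finset.mem_coe.1 hq)
      exact Prod.ext (hud q.1 h1) (hud q.2 h2)
    rw [Finset.image_congr heq, Finset.image_id, Finset.insert_erase hpA]
  · -- right inverse
    intro B hB
    rw [Finset.mem_coe, Finset.mem_filter] at hB
    obtain ⟨hbox, hM, hK, hcard, hsub⟩ := hB
    have hpnot : p ∉ B.image (Prod.map u u) := by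
      intro hmem
      obtain ⟨q', _, he⟩ := Finset.mem_image.1 hmem
      have h1 := huV q'.1
      have h2 : u q'.1 = i := congrArg Prod.fst he
      omega
    beta_reduce
    rw [Finset.erase_insert hpnot, Finset.image_image]
    have heq : Set.EqOn (Prod.map d d ∘ Prod.map u u) id B := by
      intro q _
      exact Prod.ext (hdu q.1) (hdu q.2)
    rw [Finset.image_congr heq, Finset.image_id]

end Contract
section Count
attribute [local instance] Classical.propDecidable

lemma Mcount_eq (k ℓ : ℕ) (hk : 2 ≤ k) :
    ∀ b n (S : Finset (ℕ × ℕ)), S.card = b → IsPartialMatching n S →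
      (∀ q ∈ S, q.2 = q.1 + 1) →
      ((Box n).filter (fun A => IsPartialMatching n A ∧ ¬ HasKCrossing k A ∧
        2 * A.card + ℓ = n ∧ S ⊆ A)).card = fcnt k (n - 2 * b) ℓ := by
  intro b
  induction b with
  | zero =>
    intro n S hS0 _ _
    rw [Finset.card_eq_zero] at hS0
    subst hS0
    rw [fcnt]
    simp only [Nat.mul_zero, Nat.sub_zero]
    apply congrArg
    apply Finset.filter_congr
    intro A _
    simp only [Finset.empty_subset, and_true]
  | succ b ih =>
    intro n S hScard hSM hS1
    have hne : S.Nonempty := Finset.card_pos.1 (by omega)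
    obtain ⟨p, hpS, hmax⟩ := Finset.exists_max_image S Prod.fst hne
    obtain ⟨hp1, hp2, hp3⟩ := hSM.1 p hpS
    have hp21 : p.2 = p.1 + 1 := hS1 p hpS
    have hpp : p = (p.1, p.1 + 1) := Prod.ext rfl hp21
    have hS'prop : ∀ q ∈ S.erase p, 1 ≤ q.1 ∧ q.2 = q.1 + 1 ∧ q.2 < p.1 := by
      intro q hq
      obtain ⟨hqp, hqS⟩ := Finset.mem_erase.1 hq
      obtain ⟨c1, c2, c3, c4⟩ := hSM.2 q hqS p hpS hqp
      have hmx := hmax q hqS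
      have h1 := hS1 q hqS
      have h2 := (hSM.1 q hqS).1
      exact ⟨h2, h1, by omega⟩
    have hins : S = insert (p.1, p.1 + 1) (S.erase p) := by
      rw [← hpp, Finset.insert_erase hpS]
    rw [hins, contract_step k ℓ hk (by omega) (by omega) hS'prop]
    have hcard' : (S.erase p).card = b := by
      rw [Finset.card_erase_of_mem hpS, hScard]
      omega
    have hM' : IsPartialMatching (n - 2) (S.erase p) := by
      refine ⟨fun q hq => ?_, fun q hq r hr h =>
        hSM.2 q (Finset.erase_subset _ _ hq) r (Finset.erase_subset _ _ hr) h⟩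
      obtain ⟨e1, e2, e3⟩ := hS'prop q hq
      exact ⟨e1, by omega, by omega⟩
    rw [ih (n - 2) (S.erase p) hcard' hM' (fun q hq => (hS'prop q hq).2.1)]
    congr 1
    omega

lemma Dcount_eq : ∀ n b : ℕ,
    ((Box n).filter (fun S => (IsPartialMatching n S ∧ ∀ q ∈ S, q.2 = q.1 + 1)
      ∧ S.card = b)).card = Nat.choose (n - b) b := by
  intro n
  induction n using Nat.strong_induction_on with
  | _ n IH =>
  intro b
  rcases Nat.eq_zero_or_pos b with rfl | hb
  · have hset : ((Box n).filter (fun S => (IsPartialMatching n S ∧ ∀ q ∈ S, q.2 = q.1 + 1)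
        ∧ S.card = 0)) = {∅} := by
      ext S
      simp only [Finset.mem_filter, Finset.mem_singleton, Finset.card_eq_zero]
      constructor
      · rintro ⟨-, -, rfl⟩; rfl
      · rintro rfl
        refine ⟨Finset.mem_powerset.2 (Finset.empty_subset _), ⟨⟨?_, ?_⟩, ?_⟩, rfl⟩ <;>
          · intro q hq; exact absurd hq (Finset.notMem_empty q)
    rw [hset, Finset.card_singleton, Nat.sub_zero, Nat.choose_zero_right]
  · have hemp : ∀ m : ℕ, m < 2 * b →
        ((Box m).filter (fun S => (IsPartialMatching m S ∧ ∀ q ∈ S, q.2 = q.1 + 1)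
          ∧ S.card = b)) = ∅ := by
      intro m hm
      rw [Finset.filter_eq_empty_iff]
      rintro S _ ⟨⟨hM, -⟩, hcard⟩
      have := two_mul_card_le hM
      omega
    rcases lt_or_ge n (2 * b) with hnb | hnb
    · rw [hemp n hnb, Finset.card_empty]
      symm
      exact Nat.choose_eq_zero_of_lt (by omega)
    · have hn2 : 2 ≤ n := by omega
      set e : ℕ × ℕ := (n - 1, n) with he
      have he1 : e.1 = n - 1 := rfl
      have he2 : e.2 = n := rfl
      rw [← Finset.card_filter_add_card_filter_not (s :=
        (Box n).filter (fun S => (IsPartialMatching n S ∧ ∀ q ∈ S, q.2 = q.1 + 1)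
          ∧ S.card = b)) (p := fun S => e ∈ S)]
      have part2 : (((Box n).filter (fun S => (IsPartialMatching n S ∧
            ∀ q ∈ S, q.2 = q.1 + 1) ∧ S.card = b)).filter (fun S => e ∈ S)).card
          = Nat.choose (n - 1 - b) (b - 1) := by
        have hbij : (((Box n).filter (fun S => (IsPartialMatching n S ∧
              ∀ q ∈ S, q.2 = q.1 + 1) ∧ S.card = b)).filter (fun S => e ∈ S)).card
            = ((Box (n-2)).filter (fun S => (IsPartialMatching (n-2) S ∧
              ∀ q ∈ S, q.2 = q.1 + 1) ∧ S.card = b - 1)).card := by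
          apply Finset.card_nbij' (i := fun S => S.erase e) (j := fun S => insert e S)
          · intro S hS
            simp only [Finset.mem_coe, Finset.mem_filter] at hS
            obtain ⟨⟨hbox, ⟨hM, hone⟩, hcard⟩, heS⟩ := hS
            have hM' : IsPartialMatching (n - 2) (S.erase e) := by
              refine ⟨fun q hq => ?_, fun q hq r hr h =>
                hM.2 q (Finset.erase_subset _ _ hq) r (Finset.erase_subset _ _ hr) h⟩
              obtain ⟨hqe, hqS⟩ := Finset.mem_erase.1 hq
              obtain ⟨b1, b2, b3⟩ := hM.1 q hqS
              obtain ⟨c1, c2, c3, c4⟩ := hM.2 q hqS e heS hqe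
              rw [he1] at c3
              rw [he2] at c4
              have := hone q hqS
              exact ⟨b1, b2, by omega⟩
            simp only [Finset.mem_coe, Finset.mem_filter]
            exact ⟨mem_box_of_matching hM',
              ⟨hM', fun q hq => hone q (Finset.erase_subset _ _ hq)⟩,
              by rw [Finset.card_erase_of_mem heS, hcard]⟩
          · intro S hS
            simp only [Finset.mem_coe, Finset.mem_filter] at hS
            obtain ⟨hbox, ⟨hM, hone⟩, hcard⟩ := hS
            have heS : e ∉ S := by
              intro hmem
              have := (hM.1 e hmem).2.2
              rw [he2] at this
              omega
            have hM' : IsPartialMatching n (insert e S) := by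
              constructor
              · intro q hq
                rcases Finset.mem_insert.1 hq with rfl | hq'
                · rw [he1, he2]; omega
                · obtain ⟨b1, b2, b3⟩ := hM.1 q hq'
                  exact ⟨b1, b2, by omega⟩
              · intro q hq r hr hqr
                rcases Finset.mem_insert.1 hq with rfl | hq' <;>
                  rcases Finset.mem_insert.1 hr with rfl | hr'
                · exact absurd rfl hqr
                · obtain ⟨b1, b2, b3⟩ := hM.1 r hr'
                  rw [he1, he2]
                  refine ⟨by omega, by omega, by omega, by omega⟩
                · obtain ⟨b1, b2, b3⟩ := hM.1 q hq'
                  rw [he1, he2]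
                  refine ⟨by omega, by omega, by omega, by omega⟩
                · exact hM.2 q hq' r hr' hqr
            simp only [Finset.mem_coe, Finset.mem_filter]
            refine ⟨⟨mem_box_of_matching hM', ⟨hM', ?_⟩, ?_⟩, Finset.mem_insert_self _ _⟩
            · intro q hq
              rcases Finset.mem_insert.1 hq with rfl | hq'
              · rw [he1, he2]; omega
              · exact hone q hq'
            · rw [Finset.card_insert_of_notMem heS, hcard]
              omega
          · intro S hS
            simp only [Finset.mem_coe, Finset.mem_filter] at hS
            exact Finset.insert_erase hS.2
          · intro S hS
            simp only [Finset.mem_coe, Finset.mem_filter] at hS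
            apply Finset.erase_insert
            intro hmem
            have := (hS.2.1.1.1 e hmem).2.2
            rw [he2] at this
            omega
        rw [hbij, IH (n-2) (by omega) (b-1)]
        congr 1
        omega
      have part1 : (((Box n).filter (fun S => (IsPartialMatching n S ∧
            ∀ q ∈ S, q.2 = q.1 + 1) ∧ S.card = b)).filter (fun S => ¬ e ∈ S)).card
          = Nat.choose (n - 1 - b) b := by
        have hset : (((Box n).filter (fun S => (IsPartialMatching n S ∧
              ∀ q ∈ S, q.2 = q.1 + 1) ∧ S.card = b)).filter (fun S => ¬ e ∈ S))
            = ((Box (n-1)).filter (fun S => (IsPartialMatching (n-1) S ∧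
              ∀ q ∈ S, q.2 = q.1 + 1) ∧ S.card = b)) := by
          ext S
          simp only [Finset.mem_filter]
          constructor
          · rintro ⟨⟨hbox, ⟨hM, hone⟩, hcard⟩, heS⟩
            have hM' : IsPartialMatching (n-1) S := by
              refine ⟨fun q hq => ?_, hM.2⟩
              obtain ⟨b1, b2, b3⟩ := hM.1 q hq
              have h1 := hone q hq
              have hqe : q ≠ e := fun h => heS (h ▸ hq)
              have : q.2 ≠ n := by
                intro h2n
                exact hqe (Prod.ext (by rw [he1]; omega) (by rw [he2]; omega))
              exact ⟨b1, b2, by omega⟩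
            exact ⟨mem_box_of_matching hM', ⟨hM', hone⟩, hcard⟩
          · rintro ⟨hbox, ⟨hM, hone⟩, hcard⟩
            have hM' : IsPartialMatching n S := by
              refine ⟨fun q hq => ?_, hM.2⟩
              obtain ⟨b1, b2, b3⟩ := hM.1 q hq
              exact ⟨b1, b2, by omega⟩
            refine ⟨⟨mem_box_of_matching hM', ⟨hM', hone⟩, hcard⟩, ?_⟩
            intro hmem
            have := (hM.1 e hmem).2.2
            rw [he2] at this
            omega
        rw [hset, IH (n-1) (by omega) b]
      rw [part1, part2]
      have h1 : n - b = (n - 1 - b) + 1 := by omega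
      obtain ⟨c, rfl⟩ : ∃ c, b = c + 1 := ⟨b - 1, by omega⟩
      rw [h1, Nat.choose_succ_succ]
      simp only [Nat.add_sub_cancel]

end Count

section Main
attribute [local instance] Classical.propDecidable

/-- T_{k,1}(n, (n-ℓ)/2) = Σ_{b=0}^{⌊n/2⌋} (-1)^b C(n-b, b)
f_k(n-2b, ℓ). -/
theorem stmt17 (k n ℓ : ℕ) (hk : 2 ≤ k) (h1 : ℓ ≤ n) (h2 : 2 ∣ (n - ℓ)) :
    (Tcount k 1 n ((n - ℓ) / 2) : ℤ) = ∑ b ∈ Finset.range (n / 2 + 1),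
      (-1 : ℤ) ^ b * (Nat.choose (n - b) b : ℤ) * (fcount k (n - 2 * b) ℓ : ℤ) := by
  classical
  set Pf : Finset (ℕ × ℕ) → Prop := fun A => IsPartialMatching n A ∧
    ¬ HasKCrossing k A ∧ 2 * A.card + ℓ = n with hPf
  set F := (Box n).filter Pf with hF
  set G := (Box n).filter (fun S => IsPartialMatching n S ∧ ∀ q ∈ S, q.2 = q.1 + 1)
    with hG
  -- Step A : Tcount as a finset card
  have hT : Tcount k 1 n ((n - ℓ) / 2) = (F.filter (fun A => NoOneArc A)).card := by
    rw [Tcount, natCard_eq_cnt _ n (fun A hA => mem_box_of_matching hA.1.1)]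
    rw [hF, Finset.filter_filter]
    have hiff : ∀ A : Finset (ℕ × ℕ),
        (RNAStruct k 1 n A ∧ A.card = (n - ℓ) / 2) ↔ (Pf A ∧ NoOneArc A) := by
      intro A
      rw [hPf]
      constructor
      · rintro ⟨⟨hM, hK, hN, -⟩, hcard⟩
        exact ⟨⟨hM, hK, by omega⟩, hN⟩
      · rintro ⟨⟨hM, hK, hc⟩, hN⟩
        refine ⟨⟨hM, hK, hN, ?_⟩, by omega⟩
        intro p hp
        refine ⟨p.1, p.2, fun s hs => ?_, 0, Nat.zero_lt_one, ?_⟩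
        · interval_cases s
          simpa using hp
        · simp
    apply congrArg
    ext A
    simp only [Finset.mem_filter, hiff]
  -- Step B : powerset expansion of the indicator of NoOneArc
  have hone : ∀ A ∈ F, ((if NoOneArc A then (1:ℤ) else 0) =
      ∑ S ∈ (Box n).filter (fun S => S ⊆ A.filter (fun q => q.2 = q.1 + 1)),
        (-1 : ℤ) ^ S.card) := by
    intro A hA
    rw [hF, Finset.mem_filter] at hA
    obtain ⟨hbox, hM, -, -⟩ := hA
    have hps : (Box n).filter (fun S => S ⊆ A.filter (fun q => q.2 = q.1 + 1))
        = (A.filter (fun q => q.2 = q.1 + 1)).powerset := by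
      ext S
      simp only [Finset.mem_filter, Finset.mem_powerset]
      constructor
      · tauto
      · intro hS
        refine ⟨?_, hS⟩
        rw [Box, Finset.mem_powerset]
        exact (hS.trans (Finset.filter_subset _ _)).trans
          (Finset.mem_powerset.1 hbox)
    rw [hps, Finset.sum_powerset_neg_one_pow_card]
    have hiff : NoOneArc A ↔ A.filter (fun q => q.2 = q.1 + 1) = ∅ := by
      rw [Finset.filter_eq_empty_iff]
      constructor
      · intro h q hq
        have := h q hq
        omega
      · intro h q hq
        have h2 := (hM.1 q hq).2.1
        have h3 := h hq
        omega
    simp only [hiff]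
  -- Step C : the main computation
  have hcast : ((F.filter (fun A => NoOneArc A)).card : ℤ)
      = ∑ A ∈ F, if NoOneArc A then (1:ℤ) else 0 := by rw [Finset.sum_boole]
  have hmain : ((F.filter (fun A => NoOneArc A)).card : ℤ)
      = ∑ S ∈ G, (-1 : ℤ) ^ S.card * (fcnt k (n - 2 * S.card) ℓ : ℤ) := by
    rw [hcast, Finset.sum_congr rfl hone]
    have hswap : ∑ A ∈ F, ∑ S ∈ (Box n).filter
          (fun S => S ⊆ A.filter (fun q => q.2 = q.1 + 1)), (-1 : ℤ) ^ S.card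
        = ∑ S ∈ Box n, (-1 : ℤ) ^ S.card *
            ((F.filter (fun A => S ⊆ A.filter (fun q => q.2 = q.1 + 1))).card : ℤ) := by
      simp only [Finset.sum_filter]
      rw [Finset.sum_comm]
      apply Finset.sum_congr rfl
      intro S _
      rw [Finset.card_filter]
      push_cast
      rw [Finset.mul_sum]
      apply Finset.sum_congr rfl
      intro A _
      by_cases h : S ⊆ A.filter (fun q => q.2 = q.1 + 1) <;> simp [h]
    rw [hswap]
    rw [← Finset.sum_subset (Finset.filter_subset _ (Box n) : G ⊆ Box n) ?hvanish]
    · apply Finset.sum_congr rfl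
      intro S hS
      rw [Finset.mem_filter] at hS
      obtain ⟨hbox, hSM, hSone⟩ := hS
      have hfe : F.filter (fun A => S ⊆ A.filter (fun q => q.2 = q.1 + 1))
          = (Box n).filter (fun A => IsPartialMatching n A ∧ ¬ HasKCrossing k A ∧
              2 * A.card + ℓ = n ∧ S ⊆ A) := by
        rw [hF, Finset.filter_filter]
        apply Finset.filter_congr
        intro A _
        rw [hPf]
        constructor
        · rintro ⟨⟨m1, m2, m3⟩, m4⟩
          exact ⟨m1, m2, m3, m4.trans (Finset.filter_subset _ _)⟩
        · rintro ⟨m1, m2, m3, m4⟩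
          refine ⟨⟨m1, m2, m3⟩, fun q hq => Finset.mem_filter.2 ⟨m4 hq, hSone q hq⟩⟩
      rw [hfe, Mcount_eq k ℓ hk S.card n S rfl hSM hSone]
    case hvanish =>
      intro S hSbox hSG
      have hzero : F.filter (fun A => S ⊆ A.filter (fun q => q.2 = q.1 + 1)) = ∅ := by
        rw [Finset.filter_eq_empty_iff]
        intro A hA hsub
        apply hSG
        rw [Finset.mem_filter]
        rw [hF, Finset.mem_filter, hPf] at hA
        refine ⟨hSbox, matching_subset (hsub.trans (Finset.filter_subset _ _)) hA.2.1,
          fun q hq => (Finset.mem_filter.1 (hsub hq)).2⟩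
      rw [hzero]
      simp
  -- Step D : group by cardinality
  have hgroup : ∑ S ∈ G, (-1 : ℤ) ^ S.card * (fcnt k (n - 2 * S.card) ℓ : ℤ)
      = ∑ b ∈ Finset.range (n / 2 + 1),
          (-1 : ℤ) ^ b * (Nat.choose (n - b) b : ℤ) * (fcnt k (n - 2 * b) ℓ : ℤ) := by
    rw [← Finset.sum_fiberwise_of_maps_to (g := Finset.card)
      (t := Finset.range (n / 2 + 1)) ?hmaps]
    case hmaps =>
      intro S hS
      rw [hG, Finset.mem_filter] at hS
      have := two_mul_card_le hS.2.1
      rw [Finset.mem_range]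
      omega
    apply Finset.sum_congr rfl
    intro b _
    have hstep : ∀ S ∈ G.filter (fun S => S.card = b),
        (-1 : ℤ) ^ S.card * (fcnt k (n - 2 * S.card) ℓ : ℤ)
        = (-1 : ℤ) ^ b * (fcnt k (n - 2 * b) ℓ : ℤ) := by
      intro S hS
      rw [(Finset.mem_filter.1 hS).2]
    rw [Finset.sum_congr rfl hstep, Finset.sum_const, nsmul_eq_mul]
    have hD : (G.filter (fun S => S.card = b)).card = Nat.choose (n - b) b := by
      rw [hG, Finset.filter_filter]
      exact Dcount_eq n b
    rw [hD]
    ring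
  rw [hT]
  push_cast [hmain, hgroup]
  simp only [fcount_eq]

end Main
end
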